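/- arXiv:1312.5671 — 4 statements merged into one kernel-verified Lean document; each statement's English description precedes it below -/
import Mathlib

section
/- The set NC_n of noncrossing partitions of {1,…,n}, ordered by refinement, is a lattice: any two noncrossing partitions have a least upper bound and greatest lower bound within NC_n. Moreover the meet in NC_n agrees with the meet in the full partition lattice Π_n. -/
open scoped Classical

instance {α : Type*} [Finite α] : Finite (Setoid α) :=
  Finite.of_injective (fun s : Setoid α => s.r) fun s t h => by
    cases s; cases t; congr

noncomputable instance {α : Type*} [Finite α] : Fintype (Setoid α) := Fintype.ofFinite _

/-- The blocks (equivalence classes) of a partition, as a finset of finsets. -/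
noncomputable def blocks {α : Type*} [Fintype α] (π : Setoid α) : Finset (Finset α) :=
  Finset.univ.image (fun i => Finset.univ.filter (fun j => π.r i j))

/-- The ordered (noncommutative) product of the variables `X i`, `i ∈ b`,
taken in increasing order of the indices. -/
noncomputable def orderedProd {α A : Type*} [LinearOrder α] [Ring A] (b : Finset α)
    (X : α → A) : A :=
  ((b.sort (· ≤ ·)).map X).prod

/-- A partition of `{1,…,n}` (as a setoid on `Fin n`) is noncrossing if there are no
`i < j < k < l` with `i ∼ k`, `j ∼ l` but `i ≁ j`. -/
def IsNoncrossing {n : ℕ} (π : Setoid (Fin n)) : Prop :=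
  ¬ ∃ i j k l : Fin n, i < j ∧ j < k ∧ k < l ∧ π.r i k ∧ π.r j l ∧ ¬ π.r i j

lemma nc_sInf {n : ℕ} (S : Set (Setoid (Fin n))) (h : ∀ s ∈ S, IsNoncrossing s) :
    IsNoncrossing (sInf S) := by
  rintro ⟨i, j, k, l, h1, h2, h3, hik, hjl, hij⟩
  have hik' : ∀ s ∈ S, s.r i k := Setoid.sInf_iff.mp hik
  have hjl' : ∀ s ∈ S, s.r j l := Setoid.sInf_iff.mp hjl
  have : ∃ s ∈ S, ¬ s.r i j := by
    by_contra hc; push_neg at hc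
    exact hij (Setoid.sInf_iff.mpr hc)
  obtain ⟨s, hs, hsij⟩ := this
  exact h s hs ⟨i, j, k, l, h1, h2, h3, hik' s hs, hjl' s hs, hsij⟩

lemma nc_inf {n : ℕ} {a b : Setoid (Fin n)} (ha : IsNoncrossing a) (hb : IsNoncrossing b) :
    IsNoncrossing (a ⊓ b) := by
  rintro ⟨i, j, k, l, h1, h2, h3, hik, hjl, hij⟩
  obtain ⟨hika, hikb⟩ : a.r i k ∧ b.r i k := hik
  obtain ⟨hjla, hjlb⟩ : a.r j l ∧ b.r j l := hjl
  have hij' : ¬ (a.r i j ∧ b.r i j) := hij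
  rcases not_and_or.mp hij' with h | h
  · exact ha ⟨i, j, k, l, h1, h2, h3, hika, hjla, h⟩
  · exact hb ⟨i, j, k, l, h1, h2, h3, hikb, hjlb, h⟩

/-- `NC_n`, ordered by refinement (as a subtype of the full partition lattice
`Π_n` realized as setoids on `Fin n`), is a lattice: any two noncrossing
partitions have a least upper bound and a greatest lower bound within `NC_n`;
moreover the meet in `NC_n` agrees with the meet in `Π_n`. -/
theorem stmt4 {n : ℕ} (π σ : {ρ : Setoid (Fin n) // IsNoncrossing ρ}) :
    (∃ j, IsLUB ({π, σ} : Set {ρ : Setoid (Fin n) // IsNoncrossing ρ}) j) ∧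
    (∃ m, IsGLB ({π, σ} : Set {ρ : Setoid (Fin n) // IsNoncrossing ρ}) m ∧
      m.val = π.val ⊓ σ.val) := by
  constructor
  · -- join: sInf of noncrossing upper bounds
    set U : Set (Setoid (Fin n)) :=
      {ρ | IsNoncrossing ρ ∧ π.val ≤ ρ ∧ σ.val ≤ ρ} with hU
    have hncU : IsNoncrossing (sInf U) := nc_sInf U (fun s hs => hs.1)
    refine ⟨⟨sInf U, hncU⟩, ?_, ?_⟩
    · rintro x (rfl | rfl) <;>
      · show _ ≤ sInf U
        exact le_sInf (fun s hs => by first | exact hs.2.1 | exact hs.2.2)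
    · intro u hu
      have h1 : π ≤ u := hu (Set.mem_insert _ _)
      have h2 : σ ≤ u := hu (Set.mem_insert_of_mem _ rfl)
      show sInf U ≤ u.val
      exact sInf_le ⟨u.2, h1, h2⟩
  · refine ⟨⟨π.val ⊓ σ.val, nc_inf π.2 σ.2⟩, ⟨?_, ?_⟩, rfl⟩
    · rintro x (rfl | rfl)
      · show x.val ⊓ σ.val ≤ x.val
        exact inf_le_left
      · show π.val ⊓ x.val ≤ x.val
        exact inf_le_right
    · intro u hu
      have h1 : u ≤ π := hu (Set.mem_insert _ _)
      have h2 : u ≤ σ := hu (Set.mem_insert_of_mem _ rfl)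
      show u.val ≤ π.val ⊓ σ.val
      exact le_inf h1 h2
end

section
/- Krawczyk–Speicher product formula as a corollary: if ρ is the interval partition with blocks {1,…,n_1}, {n_1+1,…,n_2}, …, {n_{r-1}+1,…,n}, then C_r(X_1⋯X_{n_1}, X_{n_1+1}⋯X_{n_2}, …, X_{n_{r-1}+1}⋯X_n) = ∑_{τ ∈ NC_n : τ ∨ ρ = 1̂_n} C_τ(X_1,…,X_n). -/
open scoped Classical

/-- The noncrossing partition lattice `NC_n` (as a subtype of setoids on `Fin n`). -/
abbrev NCPart (n : ℕ) := {π : Setoid (Fin n) // IsNoncrossing π}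

/-! ### Auxiliary lemmas -/

lemma isNoncrossing_comap {n r : ℕ} {g : Fin n → Fin r} (hg : Monotone g)
    {π : Setoid (Fin r)} (hπ : IsNoncrossing π) : IsNoncrossing (Setoid.comap g π) := by
  rintro ⟨i, j, k, l, hij, hjk, hkl, hik, hjl, hnij⟩
  have hik' : π.r (g i) (g k) := hik
  have hjl' : π.r (g j) (g l) := hjl
  have hnij' : ¬ π.r (g i) (g j) := hnij
  have h1 : g i < g j := lt_of_le_of_ne (hg hij.le) (fun h => hnij' (h ▸ π.refl' _))
  have h2 : g j < g k := lt_of_le_of_ne (hg hjk.le) (fun h => hnij' (h.symm ▸ hik'))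
  have h3 : g k < g l := by
    refine lt_of_le_of_ne (hg hkl.le) (fun h => ?_)
    have hjk'' : π.r (g j) (g k) := h.symm ▸ hjl'
    exact hnij' (π.trans' hik' (π.symm' hjk''))
  exact hπ ⟨g i, g j, g k, g l, h1, h2, h3, hik', hjl', hnij'⟩

lemma isNoncrossing_sInf {n : ℕ} {S : Set (Setoid (Fin n))} (h : ∀ t ∈ S, IsNoncrossing t) :
    IsNoncrossing (sInf S) := by
  rintro ⟨i, j, k, l, hij, hjk, hkl, hik, hjl, hnij⟩
  have hnij' : ¬ ∀ t ∈ S, t.r i j := hnij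
  push_neg at hnij'
  obtain ⟨t, htS, hnt⟩ := hnij'
  exact h t htS ⟨i, j, k, l, hij, hjk, hkl, Setoid.sInf_iff.mp hik t htS,
    Setoid.sInf_iff.mp hjl t htS, hnt⟩

lemma sorted_flatMap_le {n r : ℕ} {g : Fin n → Fin r} (hg : Monotone g) :
    ∀ (L : List (Fin r)), L.Pairwise (· < ·) →
      (L.flatMap (fun k => (Finset.univ.filter (fun i => g i = k)).sort (· ≤ ·))).Pairwise (· ≤ ·)
  | [], _ => by simp
  | k :: L, hL => by
    rw [List.flatMap_cons, List.pairwise_append]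
    refine ⟨Finset.pairwise_sort _ _, sorted_flatMap_le hg L hL.of_cons, ?_⟩
    intro x hx y hy
    rw [Finset.mem_sort, Finset.mem_filter] at hx
    rw [List.mem_flatMap] at hy
    obtain ⟨k', hk', hy'⟩ := hy
    rw [Finset.mem_sort, Finset.mem_filter] at hy'
    by_contra hxy
    have := hg (le_of_not_ge hxy)
    rw [hx.2, hy'.2] at this
    exact absurd this (not_le.mpr (List.rel_of_pairwise_cons hL hk'))

lemma sort_filter_eq_flatMap {n r : ℕ} {g : Fin n → Fin r} (hg : Monotone g)
    (B : Finset (Fin r)) :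
    (Finset.univ.filter (fun i => g i ∈ B)).sort (· ≤ ·)
      = (B.sort (· ≤ ·)).flatMap
          (fun k => (Finset.univ.filter (fun i => g i = k)).sort (· ≤ ·)) := by
  have hnd : ((B.sort (· ≤ ·)).flatMap
      (fun k => (Finset.univ.filter (fun i => g i = k)).sort (· ≤ ·))).Nodup := by
    rw [List.nodup_flatMap]
    refine ⟨fun k _ => Finset.sort_nodup _ _, ?_⟩
    refine List.Pairwise.imp_of_mem ?_ ((B.sort_nodup (· ≤ ·)))
    intro k k' _ _ hne
    rw [Function.onFun, List.disjoint_left]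
    intro a ha ha'
    rw [Finset.mem_sort, Finset.mem_filter] at ha ha'
    exact hne (ha.2 ▸ ha'.2 ▸ rfl)
  refine List.Perm.eq_of_pairwise' (Finset.pairwise_sort _ _)
    (sorted_flatMap_le hg _ (B.sortedLT_sort.pairwise)) ?_
  refine (List.perm_ext_iff_of_nodup (Finset.sort_nodup _ _) hnd).mpr (fun a => ?_)
  simp only [Finset.mem_sort, Finset.mem_filter, Finset.mem_univ, true_and, List.mem_flatMap]
  constructor
  · intro h; exact ⟨g a, h, rfl⟩
  · rintro ⟨k, hk, rfl⟩; exact hk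

lemma orderedProd_preimage {n r : ℕ} {A : Type*} [Ring A] {g : Fin n → Fin r}
    (hg : Monotone g) (X : Fin n → A) (Y : Fin r → A)
    (hY : ∀ k, Y k = orderedProd (Finset.univ.filter (fun i => g i = k)) X)
    (B : Finset (Fin r)) :
    orderedProd (Finset.univ.filter (fun i => g i ∈ B)) X = orderedProd B Y := by
  rw [orderedProd, sort_filter_eq_flatMap hg, List.map_flatMap]
  rw [orderedProd]
  induction B.sort (· ≤ ·) with
  | nil => simp
  | cons k L ih =>
    rw [List.flatMap_cons, List.prod_append, List.map_cons, List.prod_cons, ih, hY k, orderedProd]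

lemma comap_rel' {n r : ℕ} (g : Fin n → Fin r) (π : Setoid (Fin r)) (i j : Fin n) :
    (Setoid.comap g π).r i j ↔ π.r (g i) (g j) := Iff.rfl

lemma preimage_injective {n r : ℕ} {g : Fin n → Fin r} (hgsurj : Function.Surjective g) :
    Function.Injective (fun B : Finset (Fin r) => Finset.univ.filter (fun i => g i ∈ B)) := by
  intro B B' h
  ext k
  obtain ⟨i, rfl⟩ := hgsurj k
  have h2 := Finset.ext_iff.mp h i
  simpa using h2

lemma blocks_comap {n r : ℕ} {g : Fin n → Fin r} (hgsurj : Function.Surjective g)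
    (π : Setoid (Fin r)) :
    blocks (Setoid.comap g π)
      = (blocks π).image (fun B => Finset.univ.filter (fun i => g i ∈ B)) := by
  ext b
  simp only [blocks, Finset.mem_image, Finset.mem_univ, true_and]
  constructor
  · rintro ⟨i, rfl⟩
    refine ⟨Finset.univ.filter (fun j => π.r (g i) j), ⟨g i, rfl⟩, ?_⟩
    ext j
    simp [comap_rel']
  · rintro ⟨B, ⟨k, rfl⟩, rfl⟩
    obtain ⟨i, rfl⟩ := hgsurj k
    refine ⟨i, ?_⟩
    ext j
    simp [comap_rel']

lemma ite_inst {p : Prop} {i1 i2 : Decidable p} {a b : ℂ} :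
    @ite ℂ p i1 a b = @ite ℂ p i2 a b := by
  rw [Subsingleton.elim i1 i2]

lemma mobius_symm {ι : Type*} [Fintype ι] [PartialOrder ι] (mu : ι → ι → ℂ)
    (hmu : ∀ π σ : ι, π ≤ σ →
      (∑ ρ' ∈ Finset.univ.filter (fun ρ' => π ≤ ρ' ∧ ρ' ≤ σ), mu ρ' σ) =
        if π = σ then 1 else 0) :
    ∀ π θ : ι, (∑ σ ∈ Finset.univ.filter (fun σ => π ≤ σ ∧ σ ≤ θ), mu π σ)
      = if π = θ then 1 else 0 := by
  classical
  set Z : Matrix ι ι ℂ := fun a b => if a ≤ b then 1 else 0 with hZ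
  set Mu : Matrix ι ι ℂ := fun a b => if a ≤ b then mu a b else 0 with hMu
  have hZM : Z * Mu = 1 := by
    ext π σ
    rw [Matrix.mul_apply, Matrix.one_apply]
    by_cases hle : π ≤ σ
    · rw [← hmu π σ hle, Finset.sum_filter]
      refine Finset.sum_congr rfl (fun ρ' _ => ?_)
      simp only [hZ, hMu]
      by_cases h1 : π ≤ ρ' <;> by_cases h2 : ρ' ≤ σ <;> simp [h1, h2]
    · have hz : ∀ ρ' : ι, Z π ρ' * Mu ρ' σ = 0 := by
        intro ρ'
        simp only [hZ, hMu]
        by_cases h1 : π ≤ ρ' <;> by_cases h2 : ρ' ≤ σ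
        · exact absurd (h1.trans h2) hle
        all_goals simp [h1, h2]
      rw [Finset.sum_congr rfl (fun x _ => hz x), Finset.sum_const_zero]
      have hne : π ≠ σ := fun h => hle (h ▸ le_refl π)
      simp [hne]
  have hMZ : Mu * Z = 1 := mul_eq_one_comm.mp hZM
  intro π θ
  have hx := congrFun (congrFun hMZ π) θ
  rw [Matrix.mul_apply, Matrix.one_apply] at hx
  rw [← hx, Finset.sum_filter]
  refine Finset.sum_congr rfl (fun σ _ => ?_)
  simp only [hZ, hMu]
  by_cases h1 : π ≤ σ <;> by_cases h2 : σ ≤ θ <;> simp [h1, h2]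

lemma mobius_unique {ι : Type*} [Fintype ι] [PartialOrder ι] (t : ι) (ν ν' : ι → ℂ)
    (h : ∀ π, (∑ ρ' ∈ Finset.univ.filter (fun ρ' => π ≤ ρ'), ν ρ') = if π = t then 1 else 0)
    (h' : ∀ π, (∑ ρ' ∈ Finset.univ.filter (fun ρ' => π ≤ ρ'), ν' ρ') = if π = t then 1 else 0) :
    ∀ π, ν π = ν' π := by
  classical
  suffices H : ∀ N : ℕ, ∀ π : ι, (Finset.univ.filter (fun ρ' => π < ρ')).card = N →
      ν π = ν' π by
    intro π; exact H _ π rfl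
  intro N
  induction N using Nat.strong_induction_on with
  | _ N ih =>
    intro π hN
    have hsplit : Finset.univ.filter (fun ρ' => π ≤ ρ')
        = insert π (Finset.univ.filter (fun ρ' => π < ρ')) := by
      ext ρ'
      simp only [Finset.mem_filter, Finset.mem_univ, true_and, Finset.mem_insert]
      rw [le_iff_lt_or_eq]
      constructor
      · rintro (h | rfl)
        · exact Or.inr h
        · exact Or.inl rfl
      · rintro (rfl | h)
        · exact Or.inr rfl
        · exact Or.inl h
    have hπnot : π ∉ Finset.univ.filter (fun ρ' => π < ρ') := by simp
    have e1 := h π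
    have e2 := h' π
    rw [hsplit, Finset.sum_insert hπnot] at e1 e2
    have key : ∀ ρ' ∈ Finset.univ.filter (fun ρ' => π < ρ'), ν ρ' = ν' ρ' := by
      intro ρ' hρ'
      simp only [Finset.mem_filter, Finset.mem_univ, true_and] at hρ'
      refine ih _ ?_ ρ' rfl
      rw [← hN]
      have hsub : Finset.univ.filter (fun x => ρ' < x)
          ⊆ Finset.univ.filter (fun x => π < x) := by
        intro x hx
        simp only [Finset.mem_filter, Finset.mem_univ, true_and] at hx ⊢
        exact hρ'.trans hx
      exact Finset.card_lt_card ((Finset.ssubset_iff_of_subset hsub).mpr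
        ⟨ρ', by simp [hρ'], by simp⟩)
    have hkey := Finset.sum_congr rfl key
    have := e1.trans e2.symm
    rw [hkey] at this
    exact add_right_cancel this

/-- The Krawczyk–Speicher formula for free cumulants with products as entries:
if `ρ` is the interval partition with blocks `{1,…,n₁}, {n₁+1,…,n₂}, …` (encoded
by a monotone surjection `g : Fin n → Fin r` whose fibers are the blocks), then
`C_r(X_1⋯X_{n₁}, …, X_{n_{r-1}+1}⋯X_n) = ∑_{τ ∈ NC_n, τ ∨ ρ = 1̂_n} C_τ(X_1,…,X_n)`. -/
theorem stmt11 {n r : ℕ} {A : Type*} [Ring A] [Algebra ℂ A]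
    (φ : A →ₗ[ℂ] ℂ) (hφ : φ 1 = 1)
    (X : Fin n → A)
    (g : Fin n → Fin r) (hgmono : Monotone g) (hgsurj : Function.Surjective g)
    -- the interval partition `ρ` with blocks the fibers of `g`
    (ρ : NCPart n) (hρ : ∀ i j, ρ.val.r i j ↔ g i = g j)
    -- the products of the `X_i` along the blocks of `ρ`
    (Y : Fin r → A)
    (hY : ∀ k, Y k = orderedProd (Finset.univ.filter (fun i => g i = k)) X)
    -- Möbius functions of `NC_n` and `NC_r`
    (mu : NCPart n → NCPart n → ℂ)
    (hmu : ∀ π σ : NCPart n, π ≤ σ →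
      (∑ ρ' ∈ Finset.univ.filter (fun ρ' => π ≤ ρ' ∧ ρ' ≤ σ), mu ρ' σ) =
        if π = σ then 1 else 0)
    (mur : NCPart r → NCPart r → ℂ)
    (hmur : ∀ π σ : NCPart r, π ≤ σ →
      (∑ ρ' ∈ Finset.univ.filter (fun ρ' => π ≤ ρ' ∧ ρ' ≤ σ), mur ρ' σ) =
        if π = σ then 1 else 0)
    -- free cumulants of the `X_i` over `NC_n`
    (C : NCPart n → ℂ)
    (hC : ∀ τ, C τ = ∑ π ∈ Finset.univ.filter (fun π => π ≤ τ),
      (∏ b ∈ blocks π.val, φ (orderedProd b X)) * mu π τ)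
    -- the full partitions `1̂_n ∈ NC_n` and `1̂_r ∈ NC_r`
    (topn : NCPart n) (htopn : topn.val = ⊤)
    (topr : NCPart r) (htopr : topr.val = ⊤) :
    (∑ π ∈ Finset.univ.filter (fun π : NCPart r => π ≤ topr),
        (∏ b ∈ blocks π.val, φ (orderedProd b Y)) * mur π topr)
      = ∑ τ ∈ Finset.univ.filter (fun τ => IsLUB ({τ, ρ} : Set (NCPart n)) topn),
          C τ := by
  classical
  set M' : NCPart n → ℂ := fun θ => ∏ b ∈ blocks θ.val, φ (orderedProd b X) with hM'
  -- a (strictly monotone) section of `g`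
  set s : Fin r → Fin n := fun k => Classical.choose (hgsurj k) with hs
  have hsec' : ∀ k, g (s k) = k := fun k => Classical.choose_spec (hgsurj k)
  have hsmono : Monotone s := by
    intro k l hkl
    by_contra h
    have h2 := hgmono (le_of_not_ge h)
    rw [hsec', hsec'] at h2
    have hkl' : k = l := le_antisymm hkl h2
    exact h (by rw [hkl'])
  -- the order isomorphism between `NC_r` and the interval `[ρ, 1̂_n]` in `NC_n`
  set F : NCPart r → NCPart n :=
    fun π => ⟨Setoid.comap g π.1, isNoncrossing_comap hgmono π.2⟩ with hF
  set G : NCPart n → NCPart r :=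
    fun θ => ⟨Setoid.comap s θ.1, isNoncrossing_comap hsmono θ.2⟩ with hG
  have hFmono : ∀ {π π' : NCPart r}, π ≤ π' → F π ≤ F π' := by
    intro π π' h x y hxy
    exact h hxy
  have hGmono : ∀ {θ θ' : NCPart n}, θ ≤ θ' → G θ ≤ G θ' := by
    intro θ θ' h x y hxy
    exact h hxy
  have hGF : ∀ π : NCPart r, G (F π) = π := by
    intro π
    refine Subtype.ext (Setoid.ext (fun x y => ?_))
    show π.1.r (g (s x)) (g (s y)) ↔ π.1.r x y
    rw [hsec', hsec']
  have hρF : ∀ π : NCPart r, ρ ≤ F π := by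
    intro π x y hxy
    have hxy' : g x = g y := (hρ x y).mp hxy
    show π.1.r (g x) (g y)
    rw [hxy']
  have hFG : ∀ θ : NCPart n, ρ ≤ θ → F (G θ) = θ := by
    intro θ hθ
    refine Subtype.ext (Setoid.ext (fun x y => ?_))
    show θ.1.r (s (g x)) (s (g y)) ↔ θ.1.r x y
    have hx : θ.1.r (s (g x)) x := hθ ((hρ _ _).mpr (hsec' (g x)))
    have hy : θ.1.r (s (g y)) y := hθ ((hρ _ _).mpr (hsec' (g y)))
    constructor
    · intro h
      exact θ.1.trans' (θ.1.trans' (θ.1.symm' hx) h) hy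
    · intro h
      exact θ.1.trans' (θ.1.trans' hx h) (θ.1.symm' hy)
  have hFtop : F topr = topn := by
    refine Subtype.ext (Setoid.ext (fun x y => ?_))
    rw [htopn]
    constructor
    · intro _; trivial
    · intro _
      show topr.1.r (g x) (g y)
      rw [htopr]
      trivial
  have hFinj : Function.Injective F := fun a b h => by rw [← hGF a, ← hGF b, h]
  have htopn_top : ∀ θ : NCPart n, θ ≤ topn := by
    intro θ
    show θ.1 ≤ topn.1
    rw [htopn]
    exact le_top
  have htopr_top : ∀ π : NCPart r, π ≤ topr := by
    intro π
    show π.1 ≤ topr.1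
    rw [htopr]
    exact le_top
  have hmu2 := mobius_symm mu (fun π σ h => (hmu π σ h).trans ite_inst)
  -- moments of products
  have hMom : ∀ π : NCPart r, M' (F π) = ∏ B ∈ blocks π.1, φ (orderedProd B Y) := by
    intro π
    show ∏ b ∈ blocks (Setoid.comap g π.1), φ (orderedProd b X) = _
    rw [blocks_comap hgsurj,
      Finset.prod_image (fun B _ B' _ h => preimage_injective hgsurj h)]
    exact Finset.prod_congr rfl (fun B _ => by rw [orderedProd_preimage hgmono X Y hY])
  -- Möbius functions agree along the isomorphism
  have hNu : ∀ π : NCPart r, mur π topr = mu (F π) topn := by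
    refine mobius_unique topr (fun π => mur π topr) (fun π => mu (F π) topn) ?_ ?_
    · intro π
      have hfe : Finset.univ.filter (fun ρ' : NCPart r => π ≤ ρ' ∧ ρ' ≤ topr)
          = Finset.univ.filter (fun ρ' => π ≤ ρ') :=
        Finset.filter_congr (fun x _ => by simp [htopr_top x])
      rw [← hfe]
      exact (hmur π topr (htopr_top π)).trans ite_inst
    · intro π
      have h1 : (∑ ρ' ∈ Finset.univ.filter (fun ρ' => π ≤ ρ'), mu (F ρ') topn)
          = ∑ θ ∈ Finset.univ.filter (fun θ => F π ≤ θ ∧ θ ≤ topn), mu θ topn := by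
        refine Finset.sum_nbij' F G ?_ ?_ ?_ ?_ ?_
        · intro a ha
          simp only [Finset.mem_filter, Finset.mem_univ, true_and] at ha ⊢
          exact ⟨hFmono ha, htopn_top _⟩
        · intro b hb
          simp only [Finset.mem_filter, Finset.mem_univ, true_and] at hb ⊢
          have h2 := hGmono hb.1
          rwa [hGF π] at h2
        · intro a _
          exact hGF a
        · intro b hb
          simp only [Finset.mem_filter, Finset.mem_univ, true_and] at hb
          exact hFG b (le_trans (hρF π) hb.1)
        · intro a _
          rfl
      rw [h1]
      refine (hmu (F π) topn (htopn_top _)).trans ?_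
      by_cases h : π = topr
      · simp [h, hFtop]
      · have hne : F π ≠ topn := fun he => h (hFinj (he.trans hFtop.symm))
        simp [h, hne]
  -- Möbius inversion: moments in terms of cumulants
  have hE : ∀ θ : NCPart n, (∑ σ ∈ Finset.univ.filter (fun σ => σ ≤ θ), C σ) = M' θ := by
    intro θ
    have step1 : (∑ σ ∈ Finset.univ.filter (fun σ => σ ≤ θ), C σ)
        = ∑ σ : NCPart n, ∑ π : NCPart n,
            (if π ≤ σ ∧ σ ≤ θ then M' π * mu π σ else 0) := by
      rw [Finset.sum_filter]
      refine Finset.sum_congr rfl (fun σ _ => ?_)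
      by_cases hσ : σ ≤ θ
      · rw [if_pos hσ, hC σ, Finset.sum_filter]
        refine Finset.sum_congr rfl (fun π _ => ?_)
        by_cases hπ : π ≤ σ <;> simp [hπ, hσ, hM']
      · rw [if_neg hσ]
        exact (Finset.sum_eq_zero (fun π _ => by simp [hσ])).symm
    rw [step1, Finset.sum_comm]
    have step2 : ∀ π : NCPart n,
        (∑ σ : NCPart n, if π ≤ σ ∧ σ ≤ θ then M' π * mu π σ else 0)
          = M' π * (if π = θ then 1 else 0) := by
      intro π
      have e : (∑ σ ∈ Finset.univ.filter (fun σ => π ≤ σ ∧ σ ≤ θ), mu π σ)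
          = if π = θ then 1 else 0 := (hmu2 π θ).trans ite_inst
      rw [← e, Finset.sum_filter, Finset.mul_sum]
      refine Finset.sum_congr rfl (fun σ _ => ?_)
      by_cases h : π ≤ σ ∧ σ ≤ θ <;> simp [h]
    rw [Finset.sum_congr rfl (fun π _ => step2 π)]
    simp only [mul_ite, mul_one, mul_zero, Finset.sum_ite_eq', Finset.mem_univ, if_true]
  -- the sum of the Möbius function over common upper bounds of `σ` and `ρ`
  have hJ : ∀ σ : NCPart n,
      (∑ θ ∈ Finset.univ.filter (fun θ => σ ≤ θ ∧ ρ ≤ θ), mu θ topn)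
        = if IsLUB ({σ, ρ} : Set (NCPart n)) topn then 1 else 0 := by
    intro σ
    set S : Set (Setoid (Fin n)) := Subtype.val '' {θ : NCPart n | σ ≤ θ ∧ ρ ≤ θ} with hS
    have hSnc : ∀ t ∈ S, IsNoncrossing t := by rintro t ⟨θ, _, rfl⟩; exact θ.2
    set m : NCPart n := ⟨sInf S, isNoncrossing_sInf hSnc⟩ with hm
    have hσm : σ ≤ m := by
      show σ.1 ≤ sInf S
      refine le_sInf ?_
      rintro t ⟨θ, hθ, rfl⟩
      exact hθ.1
    have hρm : ρ ≤ m := by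
      show ρ.1 ≤ sInf S
      refine le_sInf ?_
      rintro t ⟨θ, hθ, rfl⟩
      exact hθ.2
    have hmle : ∀ θ : NCPart n, σ ≤ θ → ρ ≤ θ → m ≤ θ := by
      intro θ h1 h2
      show sInf S ≤ θ.1
      exact sInf_le ⟨θ, ⟨h1, h2⟩, rfl⟩
    have hfilter : Finset.univ.filter (fun θ : NCPart n => σ ≤ θ ∧ ρ ≤ θ)
        = Finset.univ.filter (fun θ => m ≤ θ ∧ θ ≤ topn) := by
      refine Finset.filter_congr (fun θ _ => ?_)
      constructor
      · rintro ⟨h1, h2⟩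
        exact ⟨hmle θ h1 h2, htopn_top θ⟩
      · rintro ⟨h, _⟩
        exact ⟨le_trans hσm h, le_trans hρm h⟩
    rw [hfilter, hmu m topn (htopn_top m)]
    by_cases hLUB : IsLUB ({σ, ρ} : Set (NCPart n)) topn
    · have hmt : m = topn := by
        refine le_antisymm (htopn_top m) (hLUB.2 ?_)
        intro x hx
        rcases hx with rfl | hx
        · exact hσm
        · rw [Set.mem_singleton_iff] at hx
          subst hx
          exact hρm
      simp [hmt, hLUB]
    · have hmt : m ≠ topn := by
        intro he
        apply hLUB
        constructor
        · intro x hx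
          rcases hx with rfl | hx
          · exact htopn_top _
          · rw [Set.mem_singleton_iff] at hx
            subst hx
            exact htopn_top _
        · intro θ hθ
          have h1 : σ ≤ θ := hθ (Set.mem_insert _ _)
          have h2 : ρ ≤ θ := hθ (Set.mem_insert_of_mem _ rfl)
          calc topn = m := he.symm
            _ ≤ θ := hmle θ h1 h2
      simp [hmt, hLUB]
  -- main computation
  calc (∑ π ∈ Finset.univ.filter (fun π : NCPart r => π ≤ topr),
        (∏ b ∈ blocks π.val, φ (orderedProd b Y)) * mur π topr)
      = ∑ π : NCPart r, (∏ B ∈ blocks π.val, φ (orderedProd B Y)) * mur π topr := by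
        rw [Finset.filter_true_of_mem (fun π _ => htopr_top π)]
    _ = ∑ π : NCPart r, M' (F π) * mu (F π) topn := by
        refine Finset.sum_congr rfl (fun π _ => ?_)
        rw [hMom π, hNu π]
    _ = ∑ θ ∈ Finset.univ.filter (fun θ : NCPart n => ρ ≤ θ), M' θ * mu θ topn := by
        refine Finset.sum_nbij' F G ?_ ?_ ?_ ?_ ?_
        · intro a _
          simp only [Finset.mem_filter, Finset.mem_univ, true_and]
          exact hρF a
        · intro b _
          exact Finset.mem_univ _
        · intro a _
          exact hGF a
        · intro b hb
          simp only [Finset.mem_filter, Finset.mem_univ, true_and] at hb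
          exact hFG b hb
        · intro a _
          rfl
    _ = ∑ θ ∈ Finset.univ.filter (fun θ : NCPart n => ρ ≤ θ),
          (∑ σ ∈ Finset.univ.filter (fun σ => σ ≤ θ), C σ) * mu θ topn := by
        refine Finset.sum_congr rfl (fun θ _ => ?_)
        rw [hE θ]
    _ = ∑ θ : NCPart n, ∑ σ : NCPart n,
          (if σ ≤ θ ∧ ρ ≤ θ then C σ * mu θ topn else 0) := by
        rw [Finset.sum_filter]
        refine Finset.sum_congr rfl (fun θ _ => ?_)
        by_cases hθ : ρ ≤ θ
        · rw [if_pos hθ, Finset.sum_filter, Finset.sum_mul]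
          refine Finset.sum_congr rfl (fun σ _ => ?_)
          by_cases hσ : σ ≤ θ <;> simp [hσ, hθ]
        · rw [if_neg hθ]
          exact (Finset.sum_eq_zero (fun σ _ => by simp [hθ])).symm
    _ = ∑ σ : NCPart n,
          C σ * (∑ θ ∈ Finset.univ.filter (fun θ => σ ≤ θ ∧ ρ ≤ θ), mu θ topn) := by
        rw [Finset.sum_comm]
        refine Finset.sum_congr rfl (fun σ _ => ?_)
        rw [Finset.sum_filter, Finset.mul_sum]
        refine Finset.sum_congr rfl (fun θ _ => ?_)
        by_cases h : σ ≤ θ ∧ ρ ≤ θ <;> simp [h]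
    _ = ∑ σ : NCPart n, C σ * (if IsLUB ({σ, ρ} : Set (NCPart n)) topn then 1 else 0) := by
        refine Finset.sum_congr rfl (fun σ _ => ?_)
        rw [hJ σ]
    _ = ∑ τ ∈ Finset.univ.filter (fun τ => IsLUB ({τ, ρ} : Set (NCPart n)) topn), C τ := by
        rw [Finset.sum_filter]
        refine Finset.sum_congr rfl (fun σ _ => ?_)
        by_cases h : IsLUB ({σ, ρ} : Set (NCPart n)) topn <;> simp [h]
end

section
/- The Kreweras complement K : NC_n → NC_n is an order-reversing bijection (anti-automorphism) of the noncrossing partition lattice: for π, σ ∈ NC_n, π ≤ σ if and only if K(σ) ≤ K(π). -/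
open scoped Classical

/-- No-crossing condition for an arbitrary relation on a linearly ordered type. -/
def IsNCRel {β : Type*} [LinearOrder β] (R : β → β → Prop) : Prop :=
  ¬ ∃ i j k l : β, i < j ∧ j < k ∧ k < l ∧ R i k ∧ R j l ∧ ¬ R i j

/-- The interweaved union of `π` and `σ`: the points of `π` are placed at the odd
positions `1,3,…,2n-1` and the points of `σ` at the even positions `2,4,…,2n`
(as a relation on `Fin (2n)`). -/
def interRel {n : ℕ} (π σ : Setoid (Fin n)) : Fin (2 * n) → Fin (2 * n) → Prop :=
  fun x y =>
    (∃ i j : Fin n, x = ⟨2 * i.val, by have := i.isLt; omega⟩ ∧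
        y = ⟨2 * j.val, by have := j.isLt; omega⟩ ∧ π.r i j) ∨
    (∃ i j : Fin n, x = ⟨2 * i.val + 1, by have := i.isLt; omega⟩ ∧
        y = ⟨2 * j.val + 1, by have := j.isLt; omega⟩ ∧ σ.r i j)

/-- `σ` is the Kreweras complement of `π`: the maximal noncrossing partition such
that the interweaved union `π ∪̃ σ` is noncrossing. -/
def IsKreweras {n : ℕ} (π σ : Setoid (Fin n)) : Prop :=
  IsNoncrossing σ ∧ IsNCRel (interRel π σ) ∧
    ∀ σ' : Setoid (Fin n), IsNoncrossing σ' → IsNCRel (interRel π σ') → σ' ≤ σ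


section KrewerasAux
variable {n : ℕ}

lemma nc_of {π : Setoid (Fin n)} (h : IsNoncrossing π) {i j k l : Fin n}
    (hij : i < j) (hjk : j < k) (hkl : k < l) (hik : π.r i k) (hjl : π.r j l) :
    π.r i j := by
  by_contra hc
  exact h ⟨i, j, k, l, hij, hjk, hkl, hik, hjl, hc⟩

def kcRel (π : Setoid (Fin n)) (x y : Fin n) : Prop :=
  ∀ a b : Fin n, π.r a b → ((a ≤ x ∧ x < b) ↔ (a ≤ y ∧ y < b))

def kc (π : Setoid (Fin n)) : Setoid (Fin n) where
  r := kcRel π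
  iseqv := ⟨fun _ _ _ _ => Iff.rfl, fun h a b hr => (h a b hr).symm,
    fun h1 h2 a b hr => (h1 a b hr).trans (h2 a b hr)⟩

def lcRel (π : Setoid (Fin n)) (x y : Fin n) : Prop :=
  ∀ a b : Fin n, π.r a b → ((a < x ∧ x ≤ b) ↔ (a < y ∧ y ≤ b))

def lc (π : Setoid (Fin n)) : Setoid (Fin n) where
  r := lcRel π
  iseqv := ⟨fun _ _ _ _ => Iff.rfl, fun h a b hr => (h a b hr).symm,
    fun h1 h2 a b hr => (h1 a b hr).trans (h2 a b hr)⟩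

lemma kc_antitone {π σ : Setoid (Fin n)} (h : π ≤ σ) : kc σ ≤ kc π := by
  rw [Setoid.le_def] at h ⊢
  intro x y hxy a b hab
  exact hxy a b (h hab)

lemma lc_antitone {π σ : Setoid (Fin n)} (h : π ≤ σ) : lc σ ≤ lc π := by
  rw [Setoid.le_def] at h ⊢
  intro x y hxy a b hab
  exact hxy a b (h hab)

lemma kc_nc (π : Setoid (Fin n)) : IsNoncrossing (kc π) := by
  rintro ⟨i, j, k, l, hij, hjk, hkl, hik, hjl, hnij⟩
  have hnij' : ¬ kcRel π i j := hnij
  rw [kcRel] at hnij'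
  push_neg at hnij'
  obtain ⟨a, b, hab, hsep⟩ := hnij'
  have hij' : i.val < j.val := hij
  have hjk' : j.val < k.val := hjk
  have hkl' : k.val < l.val := hkl
  have h1 := hik a b hab
  have h2 := hjl a b hab
  simp only [Fin.le_def, Fin.lt_def] at h1 h2 hsep
  omega

def rf (z : Fin n) : Fin n := ⟨n - 1 - z.val, by have := z.isLt; omega⟩

lemma rf_rf (z : Fin n) : rf (rf z) = z := by
  have := z.isLt; apply Fin.ext; simp [rf]; omega

def rs (π : Setoid (Fin n)) : Setoid (Fin n) where
  r := fun x y => π.r (rf x) (rf y)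
  iseqv := ⟨fun _ => π.refl' _, fun h => π.symm' h, fun h1 h2 => π.trans' h1 h2⟩

lemma rs_rel (π : Setoid (Fin n)) (x y : Fin n) :
    (rs π).r x y ↔ π.r (rf x) (rf y) := Iff.rfl

lemma rs_rs (π : Setoid (Fin n)) : rs (rs π) = π := by
  apply Setoid.ext; intro x y
  show π.r (rf (rf x)) (rf (rf y)) ↔ π.r x y
  rw [rf_rf, rf_rf]

lemma rf_val (z : Fin n) : (rf z).val = n - 1 - z.val := rfl

lemma rf_lt {a b : Fin n} : rf a < rf b ↔ b < a := by
  have := a.isLt; have := b.isLt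
  simp only [Fin.lt_def, rf_val]; omega

lemma nc_rs {π : Setoid (Fin n)} (h : IsNoncrossing π) : IsNoncrossing (rs π) := by
  rintro ⟨i, j, k, l, hij, hjk, hkl, hik, hjl, hnij⟩
  rw [rs_rel] at hik hjl hnij
  have key : π.r (rf l) (rf k) := by
    by_contra hc
    exact h ⟨rf l, rf k, rf j, rf i, rf_lt.2 hkl, rf_lt.2 hjk, rf_lt.2 hij,
      π.symm' hjl, π.symm' hik, hc⟩
  exact hnij (π.trans' hik (π.symm' (π.trans' hjl key)))

lemma swap2 (a b z : Fin n) : (a ≤ rf z ∧ rf z < b) ↔ (rf b < z ∧ z ≤ rf a) := by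
  have := a.isLt; have := b.isLt; have := z.isLt
  simp only [Fin.le_def, Fin.lt_def, rf_val]; omega

lemma lc_eq_rs_kc_rs (π : Setoid (Fin n)) : lc π = rs (kc (rs π)) := by
  apply Setoid.ext; intro x y
  show lcRel π x y ↔ kcRel (rs π) (rf x) (rf y)
  constructor
  · intro h a b hab
    have hab' : π.r (rf a) (rf b) := hab
    rw [swap2 a b x, swap2 a b y]
    exact h (rf b) (rf a) (π.symm' hab')
  · intro h a b hab
    have := h (rf b) (rf a)
      (show π.r (rf (rf b)) (rf (rf a)) by rw [rf_rf, rf_rf]; exact π.symm' hab)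
    rw [swap2 (rf b) (rf a) x, swap2 (rf b) (rf a) y, rf_rf, rf_rf] at this
    exact this

lemma kc_eq_rs_lc_rs (π : Setoid (Fin n)) : kc π = rs (lc (rs π)) := by
  have h := congrArg rs (lc_eq_rs_kc_rs (rs π))
  rw [rs_rs, rs_rs] at h
  exact h.symm

lemma lc_nc (π : Setoid (Fin n)) : IsNoncrossing (lc π) := by
  rw [lc_eq_rs_kc_rs]
  exact nc_rs (kc_nc _)

/-- If `π` is noncrossing, the interweaved union of `π` and `kc π` is noncrossing. -/
lemma kc_inter {π : Setoid (Fin n)} (hπ : IsNoncrossing π) :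
    IsNCRel (interRel π (kc π)) := by
  rintro ⟨i, j, k, l, hij, hjk, hkl, hik, hjl, hnij⟩
  have hij' : i.val < j.val := hij
  have hjk' : j.val < k.val := hjk
  have hkl' : k.val < l.val := hkl
  rcases hik with ⟨a, c, hi, hk, hac⟩ | ⟨a, c, hi, hk, hac⟩ <;>
    rcases hjl with ⟨b, d, hj, hl, hbd⟩ | ⟨b, d, hj, hl, hbd⟩ <;>
      subst hi <;> subst hk <;> subst hj <;> subst hl <;>
        simp only [Fin.mk_lt_mk] at hij' hjk' hkl'
  · have hab : a.val < b.val := by omega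
    have hbc : b.val < c.val := by omega
    have hcd : c.val < d.val := by omega
    have : π.r a b := nc_of hπ (Fin.lt_def.2 hab) (Fin.lt_def.2 hbc) (Fin.lt_def.2 hcd) hac hbd
    exact hnij (Or.inl ⟨a, b, rfl, rfl, this⟩)
  · have hbd' : kcRel π b d := hbd
    have := hbd' a c hac
    simp only [Fin.le_def, Fin.lt_def] at this
    omega
  · have hac' : kcRel π a c := hac
    have := hac' b d hbd
    simp only [Fin.le_def, Fin.lt_def] at this
    omega
  · have hab : a.val < b.val := by omega
    have hbc : b.val < c.val := by omega
    have hcd : c.val < d.val := by omega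
    have : (kc π).r a b :=
      nc_of (kc_nc π) (Fin.lt_def.2 hab) (Fin.lt_def.2 hbc) (Fin.lt_def.2 hcd) hac hbd
    exact hnij (Or.inr ⟨a, b, rfl, rfl, this⟩)

/-- Maximality: any `σ'` whose interweaved union with `π` is noncrossing is `≤ kc π`. -/
lemma kc_max (π : Setoid (Fin n)) (σ' : Setoid (Fin n))
    (h : IsNCRel (interRel π σ')) : σ' ≤ kc π := by
  have key : ∀ x y a b : Fin n, σ'.r x y → π.r a b → a ≤ x → x < b → a ≤ y ∧ y < b := by
    intro x y a b hxy hab hax hxb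
    by_contra hc
    push_neg at hc
    have hax' : a.val ≤ x.val := hax
    have hxb' : x.val < b.val := hxb
    have hc' : ¬ (a.val ≤ y.val ∧ y.val < b.val) := by
      intro ⟨h1, h2⟩; exact absurd (Fin.lt_def.2 h2) (by simpa using hc (Fin.le_def.2 h1))
    rcases Nat.lt_or_ge y.val a.val with hya | hay
    · apply h
      refine ⟨⟨2*y.val+1, by have := y.isLt; omega⟩, ⟨2*a.val, by have := a.isLt; omega⟩,
        ⟨2*x.val+1, by have := x.isLt; omega⟩, ⟨2*b.val, by have := b.isLt; omega⟩,
        by simp only [Fin.mk_lt_mk]; omega, by simp only [Fin.mk_lt_mk]; omega,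
        by simp only [Fin.mk_lt_mk]; omega,
        Or.inr ⟨y, x, rfl, rfl, σ'.symm' hxy⟩, Or.inl ⟨a, b, rfl, rfl, hab⟩, ?_⟩
      rintro (⟨i, j, hi, hj, -⟩ | ⟨i, j, hi, hj, -⟩) <;>
        simp only [Fin.mk.injEq] at hi hj <;> omega
    · have hby : b.val ≤ y.val := by omega
      apply h
      refine ⟨⟨2*a.val, by have := a.isLt; omega⟩, ⟨2*x.val+1, by have := x.isLt; omega⟩,
        ⟨2*b.val, by have := b.isLt; omega⟩, ⟨2*y.val+1, by have := y.isLt; omega⟩,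
        by simp only [Fin.mk_lt_mk]; omega, by simp only [Fin.mk_lt_mk]; omega,
        by simp only [Fin.mk_lt_mk]; omega,
        Or.inl ⟨a, b, rfl, rfl, hab⟩, Or.inr ⟨x, y, rfl, rfl, hxy⟩, ?_⟩
      rintro (⟨i, j, hi, hj, -⟩ | ⟨i, j, hi, hj, -⟩) <;>
        simp only [Fin.mk.injEq] at hi hj <;> omega
  rw [Setoid.le_def]
  intro x y hxy
  show kcRel π x y
  intro a b hab
  constructor
  · rintro ⟨h1, h2⟩; exact key x y a b hxy hab h1 h2
  · rintro ⟨h1, h2⟩; exact key y x a b (σ'.symm' hxy) hab h1 h2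

/-- Separation: if `x < y` are not related in a noncrossing `π`, some `kc π`-pair
separates them in the `lc` sense. -/
lemma kc_sep {π : Setoid (Fin n)} (hπ : IsNoncrossing π) {x y : Fin n}
    (hxy : x < y) (hnrel : ¬ π.r x y) :
    ∃ c c' : Fin n, kcRel π c c' ∧ ¬ ((c < x ∧ x ≤ c') ↔ (c < y ∧ y ≤ c')) := by
  classical
  have hn1 : 1 ≤ n := by have := x.isLt; omega
  -- the block elements of x below y
  set s : Finset (Fin n) := Finset.univ.filter (fun z => π.r x z ∧ z < y) with hs
  have hxs : x ∈ s := Finset.mem_filter.2 ⟨Finset.mem_univ x, π.refl' x, hxy⟩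
  have hne : s.Nonempty := ⟨x, hxs⟩
  set a : Fin n := s.max' hne with ha
  have hamem := s.max'_mem hne
  rw [Finset.mem_filter] at hamem
  obtain ⟨-, hxa, hay⟩ := hamem
  have hxlea : x ≤ a := s.le_max' x hxs
  have hsle : ∀ z : Fin n, π.r x z → z < y → z ≤ a := by
    intro z h1 h2
    exact s.le_max' z (by simp [hs, h1, h2])
  -- edges crossing the cut after a
  set S : Finset (Fin n) := Finset.univ.filter (fun v => ∃ u, π.r u v ∧ u ≤ a ∧ a < v) with hS
  by_cases hSne : S.Nonempty
  · set v₁ : Fin n := S.min' hSne with hv1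
    have hv1mem := S.min'_mem hSne
    rw [Finset.mem_filter] at hv1mem
    obtain ⟨-, u₀, hu₀v, hu₀a, hav₁⟩ := hv1mem
    have hv1le : ∀ v : Fin n, (∃ u, π.r u v ∧ u ≤ a ∧ a < v) → v₁ ≤ v := by
      intro v hv
      exact S.min'_le v (by simp [hS]; exact hv)
    set S' : Finset (Fin n) := Finset.univ.filter (fun u => ∃ v, π.r u v ∧ u ≤ a ∧ a < v)
      with hS'
    have hS'ne : S'.Nonempty := ⟨u₀, by simp [hS']; exact ⟨v₁, hu₀v, hu₀a, hav₁⟩⟩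
    set u₂ : Fin n := S'.max' hS'ne with hu2
    have hu2mem := S'.max'_mem hS'ne
    rw [Finset.mem_filter] at hu2mem
    obtain ⟨-, v₃, hu₂v₃, hu₂a, hav₃⟩ := hu2mem
    have hu2le : ∀ u : Fin n, (∃ v, π.r u v ∧ u ≤ a ∧ a < v) → u ≤ u₂ := by
      intro u hu
      exact S'.le_max' u (by simp [hS']; exact hu)
    by_cases hyv : y < v₁
    · -- move right: C(a) = C(v₁ - 1), separating pair (a, v₁-1)
      have hav1' : a.val < v₁.val := hav₁
      have hv1n : v₁.val - 1 < n := by have := v₁.isLt; omega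
      refine ⟨a, ⟨v₁.val - 1, hv1n⟩, ?_, ?_⟩
      · intro u v huv
        constructor
        · rintro ⟨h1, h2⟩
          have hvv1 : v₁ ≤ v := hv1le v ⟨u, huv, h1, h2⟩
          have h1' : u.val ≤ a.val := h1
          have h2' : a.val < v.val := h2
          have hvv1' : v₁.val ≤ v.val := hvv1
          exact ⟨by simp only [Fin.le_def]; omega, by simp only [Fin.lt_def]; omega⟩
        · rintro ⟨h1, h2⟩
          have h1' : u.val ≤ v₁.val - 1 := h1
          have h2' : v₁.val - 1 < v.val := h2
          have hav : a < v := by simp only [Fin.lt_def]; omega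
          refine ⟨?_, hav⟩
          by_contra hua
          have hua' : a.val < u.val := by
            rcases Nat.lt_or_ge a.val u.val with h | h
            · exact h
            · exact absurd (Fin.le_def.2 h) hua
          -- u is in (a, v₁), edge (u,v); derive u related to u₀, contradiction with min
          have huS : π.r u₀ u → False := by
            intro hr
            have := hv1le u ⟨u₀, hr, hu₀a, by simp only [Fin.lt_def]; omega⟩
            have : v₁.val ≤ u.val := this
            omega
          rcases Nat.lt_trichotomy v.val v₁.val with h | h | h
          · omega
          · have hvv1 : v = v₁ := Fin.ext h
            subst hvv1
            exact huS (π.trans' hu₀v (π.symm' huv))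
          · -- crossing u₀ < u < v₁ < v
            have : π.r u₀ u := by
              refine nc_of hπ ?_ ?_ ?_ hu₀v huv
              · simp only [Fin.lt_def]; omega
              · simp only [Fin.lt_def]; omega
              · simp only [Fin.lt_def]; omega
            exact huS this
      · intro hiff
        have := hiff.2 ⟨hay, by
          have : y.val < v₁.val := hyv
          simp only [Fin.le_def]; omega⟩
        have h1 : a.val < x.val := this.1
        have h2 : x.val ≤ a.val := hxlea
        omega
    · -- v₁ ≤ y
      push_neg at hyv
      by_cases hux : u₂ < x
      · -- move left: C(u₂) = C(a), separating pair (u₂, a)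
        refine ⟨u₂, a, ?_, ?_⟩
        · intro u v huv
          constructor
          · rintro ⟨h1, h2⟩
            have h1' : u.val ≤ u₂.val := h1
            have h2' : u₂.val < v.val := h2
            have hu2a' : u₂.val ≤ a.val := hu₂a
            refine ⟨by simp only [Fin.le_def]; omega, ?_⟩
            by_contra hva
            have hva' : v.val ≤ a.val := by
              rcases Nat.lt_or_ge a.val v.val with h | h
              · exact absurd (Fin.lt_def.2 h) hva
              · exact h
            -- v in (u₂, a], edge (u, v); contradiction with max u₂
            have hvS : π.r v v₃ → False := by
              intro hr
              have := hu2le v ⟨v₃, hr, Fin.le_def.2 hva', hav₃⟩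
              have : v.val ≤ u₂.val := this
              omega
            rcases Nat.lt_trichotomy u.val u₂.val with h | h | h
            · -- crossing u < u₂ < v < v₃
              have hrel : π.r u u₂ := by
                refine nc_of hπ ?_ ?_ ?_ huv hu₂v₃
                · simp only [Fin.lt_def]; omega
                · simp only [Fin.lt_def]; omega
                · simp only [Fin.lt_def]; omega
              exact hvS (π.trans' (π.trans' (π.symm' huv) hrel) hu₂v₃)
            · have huu2 : u = u₂ := Fin.ext h
              subst huu2
              exact hvS (π.trans' (π.symm' huv) hu₂v₃)
            · omega
          · rintro ⟨h1, h2⟩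
            have hle : u ≤ u₂ := hu2le u ⟨v, huv, h1, h2⟩
            have : u₂.val ≤ a.val := hu₂a
            have h2' : a.val < v.val := h2
            exact ⟨hle, by simp only [Fin.lt_def]; omega⟩
        · intro hiff
          have := hiff.1 ⟨hux, hxlea⟩
          have h1 : y.val ≤ a.val := this.2
          have h2 : a.val < y.val := hay
          omega
      · -- both fail: contradiction
        exfalso
        push_neg at hux
        have hxv1 : ¬ π.r x v₁ := by
          intro hr
          rcases Nat.lt_trichotomy v₁.val y.val with h | h | h
          · have := hsle v₁ hr (Fin.lt_def.2 h)
            have : v₁.val ≤ a.val := this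
            have : a.val < v₁.val := hav₁
            omega
          · exact hnrel (by rwa [show v₁ = y from Fin.ext h] at hr)
          · have : v₁.val ≤ y.val := hyv
            omega
        -- Step 1: x ~ u₂
        have hxu2 : π.r x u₂ := by
          rcases Nat.lt_trichotomy x.val u₂.val with h | h | h
          · rcases Nat.lt_trichotomy u₂.val a.val with h' | h' | h'
            · refine nc_of hπ (Fin.lt_def.2 h) (Fin.lt_def.2 h') hav₃ hxa hu₂v₃
            · rwa [show u₂ = a from Fin.ext h']
            · have : u₂.val ≤ a.val := hu₂a
              omega
          · rw [show u₂ = x from Fin.ext h.symm]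
          · have : x.val ≤ u₂.val := hux
            omega
        -- Step 2: x ~ v₃ and v₃ > y
        have hxv3 : π.r x v₃ := π.trans' hxu2 hu₂v₃
        have hyv3 : y.val < v₃.val := by
          rcases Nat.lt_trichotomy v₃.val y.val with h | h | h
          · have := hsle v₃ hxv3 (Fin.lt_def.2 h)
            have : v₃.val ≤ a.val := this
            have : a.val < v₃.val := hav₃
            omega
          · exact absurd (by rwa [show v₃ = y from Fin.ext h] at hxv3) hnrel
          · exact h
        -- Step 3: ¬ x ~ u₀ (renamed u₁ := u₀)
        have hnxu0 : ¬ π.r u₀ x := fun hr => hxv1 (π.trans' (π.symm' hr) hu₀v)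
        -- Step 4: u₀ < x
        have hu0x : u₀.val < x.val := by
          rcases Nat.lt_trichotomy u₀.val x.val with h | h | h
          · exact h
          · exact absurd (by rw [show u₀ = x from Fin.ext h]) hnxu0
          · exfalso
            have hu0a : u₀.val ≤ a.val := hu₀a
            rcases Nat.lt_trichotomy u₀.val a.val with h' | h' | h'
            · have : π.r x u₀ :=
                nc_of hπ (Fin.lt_def.2 h) (Fin.lt_def.2 h') hav₁ hxa hu₀v
              exact hnxu0 (π.symm' this)
            · exact hxv1 (π.trans' (show π.r x u₀ by rw [show u₀ = a from Fin.ext h']; exact hxa) hu₀v)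
            · omega
        -- Step 5: final crossing u₀ < x < v₁ < v₃
        have hxlea' : x.val ≤ a.val := hxlea
        have hav1' : a.val < v₁.val := hav₁
        have hv1y : v₁.val ≤ y.val := hyv
        have : π.r u₀ x := by
          refine nc_of hπ (Fin.lt_def.2 hu0x) ?_ ?_ hu₀v hxv3
          · simp only [Fin.lt_def]; omega
          · simp only [Fin.lt_def]; omega
        exact hnxu0 this
  · -- no edge crosses the cut after a: pair (a, n-1)
    refine ⟨a, ⟨n - 1, by omega⟩, ?_, ?_⟩
    · intro u v huv
      constructor
      · rintro ⟨h1, h2⟩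
        exact absurd ⟨v, by simp [hS]; exact ⟨u, huv, h1, h2⟩⟩ hSne
      · rintro ⟨h1, h2⟩
        have : v.val < n := v.isLt
        have h2' : n - 1 < v.val := h2
        omega
    · intro hiff
      have hyn : y.val ≤ n - 1 := by have := y.isLt; omega
      have := hiff.2 ⟨hay, Fin.le_def.2 hyn⟩
      have h1 : a.val < x.val := this.1
      have h2 : x.val ≤ a.val := hxlea
      omega


lemma lc_kc {π : Setoid (Fin n)} (hπ : IsNoncrossing π) : lc (kc π) = π := by
  apply le_antisymm
  · -- lc (kc π) ≤ π
    rw [Setoid.le_def]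
    intro x y hxy
    by_contra hn
    rcases lt_trichotomy x y with h | h | h
    · obtain ⟨c, c', hcc, hsep⟩ := kc_sep hπ h hn
      exact hsep (hxy c c' hcc)
    · exact hn (h ▸ π.refl' x)
    · obtain ⟨c, c', hcc, hsep⟩ := kc_sep hπ h (fun hr => hn (π.symm' hr))
      exact hsep ((hxy c c' hcc).symm)
  · -- π ≤ lc (kc π)
    rw [Setoid.le_def]
    intro x y hxy
    show lcRel (kc π) x y
    intro a b hab
    have hab' : kcRel π a b := hab
    have H1 := hab' x y hxy
    have H2 := hab' y x (π.symm' hxy)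
    simp only [Fin.le_def, Fin.lt_def] at H1 H2 ⊢
    omega

lemma kc_lc {ρ : Setoid (Fin n)} (hρ : IsNoncrossing ρ) : kc (lc ρ) = ρ := by
  rw [lc_eq_rs_kc_rs, kc_eq_rs_lc_rs, rs_rs, lc_kc (nc_rs hρ), rs_rs]

end KrewerasAux

/-- The Kreweras complement is an order-reversing bijection of the noncrossing
partition lattice: `π ≤ σ ↔ K(σ) ≤ K(π)`. -/
theorem stmt15 {n : ℕ} (K : Setoid (Fin n) → Setoid (Fin n))
    (hK : ∀ π, IsNoncrossing π → IsKreweras π (K π)) :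
    (∀ π σ : Setoid (Fin n), IsNoncrossing π → IsNoncrossing σ →
      (π ≤ σ ↔ K σ ≤ K π)) ∧
    Set.BijOn K {π | IsNoncrossing π} {π | IsNoncrossing π} := by
  have K_eq : ∀ π : Setoid (Fin n), IsNoncrossing π → K π = kc π := fun π hπ =>
    le_antisymm (kc_max π (K π) (hK π hπ).2.1)
      ((hK π hπ).2.2 (kc π) (kc_nc π) (kc_inter hπ))
  constructor
  · intro π σ hπ hσ
    constructor
    · intro h
      rw [K_eq σ hσ, K_eq π hπ]
      exact kc_antitone h
    · intro h
      rw [K_eq σ hσ, K_eq π hπ] at h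
      have h2 := lc_antitone h
      rwa [lc_kc hπ, lc_kc hσ] at h2
  · refine ⟨fun π hπ => (hK π hπ).1, fun π hπ σ hσ h => ?_, fun ρ hρ => ?_⟩
    · have hkc : kc π = kc σ := by rw [← K_eq π hπ, ← K_eq σ hσ, h]
      have h2 := congrArg lc hkc
      rwa [lc_kc hπ, lc_kc hσ] at h2
    · exact ⟨lc ρ, lc_nc ρ, by rw [K_eq (lc ρ) (lc_nc ρ)]; exact kc_lc hρ⟩
end

section
/- For π ∈ NC_n, the interval [π, 1̂_n] in NC_n is anti-isomorphic as a poset to the interval [0̂_n, K(π)] in NC_n, via the Kreweras complement map σ ↦ K(σ). -/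
open scoped Classical

section Krew
variable {n : ℕ}

set_option linter.deprecated false

/-- `(x,y]` is a union of `σ`-classes. -/
def satR (σ : Setoid (Fin n)) (x y : Fin n) : Prop :=
  ∀ a c : Fin n, σ.r a c → x < a → a ≤ y → x < c ∧ c ≤ y

lemma satR_self (σ : Setoid (Fin n)) (x : Fin n) : satR σ x x := by
  intro a c _ h1 h2; exact absurd (lt_of_lt_of_le h1 h2) (lt_irrefl _)

lemma satA {σ : Setoid (Fin n)} {x y z : Fin n} (h1 : satR σ x y) (h2 : satR σ y z)
    (hxy : x ≤ y) (hyz : y ≤ z) : satR σ x z := by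
  intro a c hac ha1 ha2
  by_cases hy : a ≤ y
  · obtain ⟨u, v⟩ := h1 a c hac ha1 hy
    exact ⟨u, le_trans v hyz⟩
  · push_neg at hy
    obtain ⟨u, v⟩ := h2 a c hac hy ha2
    exact ⟨lt_of_le_of_lt hxy u, v⟩

lemma satB {σ : Setoid (Fin n)} {x y z : Fin n} (hxz : satR σ x z) (hyz : satR σ y z)
    (hxy : x ≤ y) (_hyz' : y ≤ z) : satR σ x y := by
  intro a c hac ha1 ha2
  obtain ⟨u, v⟩ := hxz a c hac ha1 (le_trans ha2 _hyz')
  refine ⟨u, ?_⟩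
  by_contra hcy
  push_neg at hcy
  obtain ⟨u2, _⟩ := hyz c a (σ.symm' hac) hcy v
  exact absurd (lt_of_lt_of_le u2 ha2) (lt_irrefl _)

lemma satC {σ : Setoid (Fin n)} {x y z : Fin n} (hxz : satR σ x z) (hxy : satR σ x y)
    (_hxy' : x ≤ y) (_hyz' : y ≤ z) : satR σ y z := by
  intro a c hac ha1 ha2
  obtain ⟨u, v⟩ := hxz a c hac (lt_of_le_of_lt _hxy' ha1) ha2
  refine ⟨?_, v⟩
  by_contra hcy
  push_neg at hcy
  obtain ⟨_, v2⟩ := hxy c a (σ.symm' hac) u hcy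
  exact absurd (lt_of_lt_of_le ha1 v2) (lt_irrefl _)

/-- The (right) Kreweras complement, explicitly: `u ∼ v` iff the interval
`(min u v, max u v]` is a union of `σ`-classes. -/
def Kr (σ : Setoid (Fin n)) : Setoid (Fin n) where
  r u v := satR σ (min u v) (max u v)
  iseqv := by
    refine ⟨fun u => by simpa using satR_self σ u, ?_, ?_⟩
    · intro u v h
      simpa [min_comm, max_comm] using h
    · intro u v w h1 h2
      rcases le_total u v with huv | huv <;> rcases le_total v w with hvw | hvw <;>
        rcases le_total u w with huw | huw
      · rw [min_eq_left huv, max_eq_right huv] at h1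
        rw [min_eq_left hvw, max_eq_right hvw] at h2
        rw [min_eq_left huw, max_eq_right huw]
        exact satA h1 h2 huv hvw
      · have : u = w := le_antisymm (le_trans huv hvw) huw
        subst this
        simpa using satR_self σ u
      · rw [min_eq_left huv, max_eq_right huv] at h1
        rw [min_eq_right hvw, max_eq_left hvw] at h2
        rw [min_eq_left huw, max_eq_right huw]
        exact satB h1 h2 huw hvw
      · rw [min_eq_left huv, max_eq_right huv] at h1
        rw [min_eq_right hvw, max_eq_left hvw] at h2
        rw [min_eq_right huw, max_eq_left huw]
        exact satB h2 h1 huw huv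
      · rw [min_eq_right huv, max_eq_left huv] at h1
        rw [min_eq_left hvw, max_eq_right hvw] at h2
        rw [min_eq_left huw, max_eq_right huw]
        exact satC h2 h1 huv huw
      · rw [min_eq_right huv, max_eq_left huv] at h1
        rw [min_eq_left hvw, max_eq_right hvw] at h2
        rw [min_eq_right huw, max_eq_left huw]
        exact satC h1 h2 hvw huw
      · have : u = w := le_antisymm huw (le_trans hvw huv)
        subst this
        simpa using satR_self σ u
      · rw [min_eq_right huv, max_eq_left huv] at h1
        rw [min_eq_right hvw, max_eq_left hvw] at h2
        rw [min_eq_right huw, max_eq_left huw]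
        exact satA h2 h1 hvw huv

lemma kr_rel {σ : Setoid (Fin n)} {x y : Fin n} (h : x ≤ y) :
    (Kr σ).r x y ↔ satR σ x y := by
  show satR σ (min x y) (max x y) ↔ _
  rw [min_eq_left h, max_eq_right h]

/-- `Kr σ` is always noncrossing. -/
lemma NC_Kr (σ : Setoid (Fin n)) : IsNoncrossing (Kr σ) := by
  rintro ⟨i, j, k, l, hij, hjk, hkl, hik, hjl, hnij⟩
  apply hnij
  rw [kr_rel (le_of_lt (lt_trans hij hjk))] at hik
  rw [kr_rel (le_of_lt (lt_trans hjk hkl))] at hjl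
  rw [kr_rel (le_of_lt hij)]
  intro a c hac ha1 ha2
  obtain ⟨u, v⟩ := hik a c hac ha1 (le_trans ha2 (le_of_lt hjk))
  refine ⟨u, ?_⟩
  by_contra hcj
  push_neg at hcj
  obtain ⟨u2, _⟩ := hjl c a (σ.symm' hac) hcj (le_trans v (le_of_lt hkl))
  exact absurd (lt_of_lt_of_le u2 ha2) (lt_irrefl _)

lemma Kr_anti {σ τ : Setoid (Fin n)} (h : σ ≤ τ) : Kr τ ≤ Kr σ := by
  intro x y hxy
  intro a c hac ha1 ha2
  exact hxy a c (h hac) ha1 ha2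

/-- Order-reversal of `Fin n`. -/
def rv (i : Fin n) : Fin n := ⟨n - 1 - i.val, by have := i.isLt; omega⟩

lemma rv_rv (i : Fin n) : rv (rv i) = i := by
  apply Fin.ext; simp only [rv]; have := i.isLt; omega

lemma rv_lt_rv {i j : Fin n} : rv j < rv i ↔ i < j := by
  simp only [rv, Fin.lt_def]; have := i.isLt; have := j.isLt; omega

lemma rv_le_rv {i j : Fin n} : rv j ≤ rv i ↔ i ≤ j := by
  simp only [rv, Fin.le_def]; have := i.isLt; have := j.isLt; omega

lemma le_rv {a b : Fin n} : a ≤ rv b ↔ b ≤ rv a := by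
  simp only [rv, Fin.le_def]; have := a.isLt; have := b.isLt; omega

lemma rv_lt {a b : Fin n} : rv a < b ↔ rv b < a := by
  simp only [rv, Fin.lt_def]; have := a.isLt; have := b.isLt; omega

/-- Reversed setoid. -/
def revS (σ : Setoid (Fin n)) : Setoid (Fin n) where
  r x y := σ.r (rv x) (rv y)
  iseqv := ⟨fun x => σ.refl' _, fun h => σ.symm' h, fun h1 h2 => σ.trans' h1 h2⟩

lemma revS_rel {σ : Setoid (Fin n)} {x y : Fin n} :
    (revS σ).r x y ↔ σ.r (rv x) (rv y) := Iff.rfl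

lemma revS_revS (σ : Setoid (Fin n)) : revS (revS σ) = σ := by
  apply Setoid.ext
  intro a b
  show σ.r (rv (rv a)) (rv (rv b)) ↔ _
  rw [rv_rv, rv_rv]

lemma revS_mono {σ τ : Setoid (Fin n)} (h : σ ≤ τ) : revS σ ≤ revS τ := by
  intro x y hxy
  exact h (show σ.r (rv x) (rv y) from hxy)

lemma revS_NC {σ : Setoid (Fin n)} (hσ : IsNoncrossing σ) : IsNoncrossing (revS σ) := by
  rintro ⟨i, j, k, l, hij, hjk, hkl, hik, hjl, hnij⟩
  rw [revS_rel] at hik hjl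
  refine hσ ⟨rv l, rv k, rv j, rv i, rv_lt_rv.mpr hkl, rv_lt_rv.mpr hjk, rv_lt_rv.mpr hij,
    σ.symm' hjl, σ.symm' hik, ?_⟩
  intro h
  exact hnij (revS_rel.mpr (σ.trans' (σ.trans' hik (σ.symm' h)) (σ.symm' hjl)))

/-- The (left) Kreweras complement. -/
def Kl (τ : Setoid (Fin n)) : Setoid (Fin n) := revS (Kr (revS τ))

lemma Kl_anti {σ τ : Setoid (Fin n)} (h : σ ≤ τ) : Kl τ ≤ Kl σ :=
  revS_mono (Kr_anti (revS_mono h))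

lemma NC_Kl (τ : Setoid (Fin n)) : IsNoncrossing (Kl τ) := revS_NC (NC_Kr _)

lemma Kl_rel_iff {τ : Setoid (Fin n)} {p q : Fin n} (hpq : p < q) :
    (Kl τ).r p q ↔ ∀ x y : Fin n, τ.r x y → (p ≤ x ∧ x < q) → (p ≤ y ∧ y < q) := by
  have h1 : rv q < rv p := rv_lt_rv.mpr hpq
  show (Kr (revS τ)).r (rv p) (rv q) ↔ _
  refine Iff.trans ⟨(Kr (revS τ)).symm', (Kr (revS τ)).symm'⟩ ?_
  show (Kr (revS τ)).r (rv q) (rv p) ↔ _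
  rw [kr_rel (le_of_lt h1)]
  constructor
  · intro h x y hxy ⟨hx1, hx2⟩
    have := h (rv x) (rv y) (by rw [revS_rel, rv_rv, rv_rv]; exact hxy)
      (rv_lt_rv.mpr hx2) (rv_le_rv.mpr hx1)
    exact ⟨rv_le_rv.mp this.2, rv_lt_rv.mp this.1⟩
  · intro h a c hac ha1 ha2
    rw [revS_rel] at hac
    have := h (rv a) (rv c) hac ⟨le_rv.mp ha2, rv_lt.mp ha1⟩
    exact ⟨rv_lt.mpr this.2, le_rv.mpr this.1⟩

/-- Gap lemma: if `u ∼ v`, no class-mate of `u` lies strictly between `u` and `v`,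
then the class of any `a` strictly between (not related to `u`) stays strictly between. -/
lemma gap {σ : Setoid (Fin n)} (hσ : IsNoncrossing σ) {u v : Fin n}
    (huv : σ.r u v) (hgap : ∀ z, σ.r u z → ¬(u < z ∧ z < v))
    {a : Fin n} (hua : u < a) (hav : a < v) (hna : ¬σ.r u a)
    {c : Fin n} (hac : σ.r a c) : u < c ∧ c < v := by
  rcases lt_trichotomy c u with hc | hc | hc
  · exfalso
    refine hσ ⟨c, u, a, v, hc, hua, hav, σ.symm' hac, huv, ?_⟩
    intro h
    exact hna (σ.trans' (σ.symm' h) (σ.symm' hac))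
  · exact absurd (σ.symm' (hc ▸ hac)) hna
  · rcases lt_trichotomy c v with hc2 | hc2 | hc2
    · exact ⟨hc, hc2⟩
    · exact absurd (σ.trans' (hc2 ▸ hac : σ.r a v) (σ.symm' huv) |> σ.symm') hna
    · exact absurd ⟨u, a, v, c, hua, hav, hc2, huv, hac, hna⟩ hσ

/-- The crux: if `[b,d)` is a union of `Kr σ`-classes then `b ∼ d` in `σ`. -/
lemma crux {σ : Setoid (Fin n)} (hσ : IsNoncrossing σ) :
    ∀ m : ℕ, ∀ b d : Fin n, d.val - b.val ≤ m → b < d →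
      (∀ x y : Fin n, x < y → satR σ x y → ((b ≤ x ∧ x < d) ↔ (b ≤ y ∧ y < d))) →
      σ.r b d := by
  intro m
  induction m with
  | zero =>
    intro b d hm hbd _
    exact absurd hbd (by rw [Fin.lt_def]; omega)
  | succ m ih =>
    intro b d hm hbd H
    -- maximal saturated reach from b
    set S : Finset (Fin n) := Finset.univ.filter (fun y => b ≤ y ∧ satR σ b y) with hS
    have hbS : b ∈ S := by
      simp only [hS, Finset.mem_filter, Finset.mem_univ, true_and]
      exact ⟨le_refl b, satR_self σ b⟩
    set ys : Fin n := S.max' ⟨b, hbS⟩ with hys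
    have hysS : ys ∈ S := S.max'_mem _
    obtain ⟨hbys, hsatbys⟩ : b ≤ ys ∧ satR σ b ys := by
      simpa only [hS, Finset.mem_filter, Finset.mem_univ, true_and] using hysS
    have hmax : ∀ y : Fin n, b ≤ y → satR σ b y → y ≤ ys := by
      intro y h1 h2
      exact Finset.le_max' S y (by
        simp only [hS, Finset.mem_filter, Finset.mem_univ, true_and]; exact ⟨h1, h2⟩)
    have hysd : ys < d := by
      rcases eq_or_lt_of_le hbys with h | h
      · exact h ▸ hbd
      · by_contra hc
        push_neg at hc
        have := (H b ys h hsatbys).mp ⟨le_refl b, hbd⟩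
        exact absurd this.2 (not_lt.mpr hc)
    -- d1 = ys + 1
    have hd1lt : ys.val + 1 < n := by have := d.isLt; rw [Fin.lt_def] at hysd; omega
    set d1 : Fin n := ⟨ys.val + 1, hd1lt⟩ with hd1
    have hysd1 : ys < d1 := by rw [Fin.lt_def]; simp [hd1]
    have hd1d : d1 ≤ d := by rw [Fin.le_def] at *; rw [Fin.lt_def] at hysd; simp [hd1]; omega
    have hbd1 : b < d1 := lt_of_le_of_lt hbys hysd1
    have F1 : ∀ z : Fin n, σ.r d1 z → ¬(b < z ∧ z ≤ ys) := by
      rintro z hz ⟨h1, h2⟩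
      have := hsatbys z d1 (σ.symm' hz) h1 h2
      exact absurd this.2 (not_le.mpr hysd1)
    -- P = class-mates of d1 below it
    set P : Finset (Fin n) := Finset.univ.filter (fun z => σ.r d1 z ∧ z < d1) with hP
    by_cases hPne : P.Nonempty
    · -- p = max P
      set p : Fin n := P.max' hPne with hp
      obtain ⟨hpd1, hplt⟩ : σ.r d1 p ∧ p < d1 := by
        simpa only [hP, Finset.mem_filter, Finset.mem_univ, true_and] using P.max'_mem hPne
      have hpmax : ∀ z : Fin n, σ.r d1 z → z < d1 → z ≤ p := by
        intro z h1 h2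
        exact Finset.le_max' P z (by
          simp only [hP, Finset.mem_filter, Finset.mem_univ, true_and]; exact ⟨h1, h2⟩)
      have hpb : p ≤ b := by
        by_contra hc
        push_neg at hc
        exact F1 p hpd1 ⟨hc, by rw [Fin.le_def]; rw [Fin.lt_def] at hplt; simp [hd1] at hplt; omega⟩
      rcases eq_or_lt_of_le hpb with hpb' | hpb'
      · -- p = b : σ b d1, then finish or recurse
        have hbd1rel : σ.r b d1 := σ.symm' (hpb' ▸ hpd1)
        rcases eq_or_lt_of_le hd1d with he | he
        · exact he ▸ hbd1rel
        · -- recurse on (d1, d)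
          have H' : ∀ x y : Fin n, x < y → satR σ x y →
              ((d1 ≤ x ∧ x < d) ↔ (d1 ≤ y ∧ y < d)) := by
            intro x y hxy hsat
            have Hxy := H x y hxy hsat
            constructor
            · rintro ⟨h1, h2⟩
              obtain ⟨h3, h4⟩ := Hxy.mp ⟨le_trans (le_of_lt hbd1) h1, h2⟩
              exact ⟨le_trans h1 (le_of_lt hxy), h4⟩
            · rintro ⟨h1, h2⟩
              obtain ⟨h3, h4⟩ := Hxy.mpr ⟨le_trans (le_of_lt hbd1) h1, h2⟩
              refine ⟨?_, h4⟩
              by_contra hc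
              push_neg at hc
              have := hsat d1 b (σ.symm' hbd1rel) hc h1
              exact absurd this.1 (not_lt.mpr h3)
          have hrec : σ.r d1 d := by
            apply ih d1 d ?_ he H'
            rw [Fin.lt_def] at hbd1
            simp only [hd1] at *
            omega
          exact σ.trans' hbd1rel hrec
      · -- p < b : contradiction via saturated (p, ys]
        exfalso
        have hsat : satR σ p ys := by
          intro a c hac ha1 ha2
          by_cases hba : b < a
          · obtain ⟨h1, h2⟩ := hsatbys a c hac hba ha2
            exact ⟨lt_trans hpb' h1, h2⟩
          · push_neg at hba
            have hnaK : ¬σ.r p a := by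
              intro hcon
              have : σ.r d1 a := σ.trans' hpd1 hcon
              have := hpmax a this (lt_of_le_of_lt hba hbd1)
              exact absurd ha1 (not_lt.mpr this)
            have hgap2 : ∀ z, σ.r p z → ¬(p < z ∧ z < d1) := by
              rintro z hz ⟨h1, h2⟩
              have := hpmax z (σ.trans' hpd1 hz) h2
              exact absurd h1 (not_lt.mpr this)
            obtain ⟨h1, h2⟩ := gap hσ (σ.symm' hpd1) hgap2 ha1
              (lt_of_le_of_lt hba hbd1) hnaK hac
            refine ⟨h1, ?_⟩
            rw [Fin.le_def]; rw [Fin.lt_def] at h2; simp [hd1] at h2; omega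
        have hpys : p < ys := lt_of_lt_of_le hpb' hbys
        have := (H p ys hpys hsat).mpr ⟨hbys, hysd⟩
        exact absurd this.1 (not_le.mpr hpb')
    · -- P empty : contradiction via saturated (b, M]
      exfalso
      have hPe : ∀ z : Fin n, σ.r d1 z → d1 ≤ z := by
        intro z h1
        by_contra hc
        push_neg at hc
        refine hPne ⟨z, ?_⟩
        simp only [hP, Finset.mem_filter, Finset.mem_univ, true_and]
        exact ⟨h1, hc⟩
      set CK : Finset (Fin n) := Finset.univ.filter (fun z => σ.r d1 z) with hCK
      have hmemCK : ∀ z : Fin n, z ∈ CK ↔ σ.r d1 z := by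
        intro z
        simp only [hCK, Finset.mem_filter, Finset.mem_univ, true_and]
      have hd1CK : d1 ∈ CK := (hmemCK d1).mpr (σ.refl' d1)
      set M : Fin n := CK.max' ⟨d1, hd1CK⟩ with hM
      have hMrel : σ.r d1 M := (hmemCK M).mp (CK.max'_mem ⟨d1, hd1CK⟩)
      have hd1M : d1 ≤ M := Finset.le_max' CK d1 hd1CK
      have hsatbM : satR σ b M := by
        intro a c hac ha1 ha2
        by_cases haK : σ.r d1 a
        · have hcK : σ.r d1 c := σ.trans' haK hac
          refine ⟨lt_of_le_of_lt hbys (lt_of_lt_of_le hysd1 (hPe c hcK)), ?_⟩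
          exact Finset.le_max' CK c ((hmemCK c).mpr hcK)
        · by_cases hay : a ≤ ys
          · obtain ⟨h1, h2⟩ := hsatbys a c hac ha1 hay
            exact ⟨h1, le_trans h2 (le_trans (le_of_lt hysd1) hd1M)⟩
          · push_neg at hay
            have had1 : d1 < a := by
              rcases eq_or_lt_of_le (show d1 ≤ a by
                rw [Fin.le_def]; rw [Fin.lt_def] at hay; simp only [hd1]; omega) with h | h
              · exact absurd (h ▸ σ.refl' d1) haK
              · exact h
            -- a sits in a gap of the class CK
            have hk1ne : (CK.filter (fun k => k < a)).Nonempty := by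
              refine ⟨d1, ?_⟩
              rw [Finset.mem_filter]
              exact ⟨hd1CK, had1⟩
            set k1 : Fin n := (CK.filter (fun k => k < a)).max' hk1ne with hk1
            have hk1mem := (CK.filter (fun k => k < a)).max'_mem hk1ne
            rw [Finset.mem_filter] at hk1mem
            obtain ⟨hk1CK, hk1a⟩ := hk1mem
            have hk1rel : σ.r d1 k1 := (hmemCK k1).mp hk1CK
            have haM : a < M := by
              rcases eq_or_lt_of_le ha2 with h | h
              · exact absurd (h ▸ hMrel) haK
              · exact h
            have hk2ne : (CK.filter (fun k => a < k)).Nonempty := by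
              refine ⟨M, ?_⟩
              rw [Finset.mem_filter]
              exact ⟨(hmemCK M).mpr hMrel, haM⟩
            set k2 : Fin n := (CK.filter (fun k => a < k)).min' hk2ne with hk2
            have hk2mem := (CK.filter (fun k => a < k)).min'_mem hk2ne
            rw [Finset.mem_filter] at hk2mem
            obtain ⟨hk2CK, hak2⟩ := hk2mem
            have hk2rel : σ.r d1 k2 := (hmemCK k2).mp hk2CK
            have hgap3 : ∀ z, σ.r k1 z → ¬(k1 < z ∧ z < k2) := by
              rintro z hz ⟨h1, h2⟩
              have hzK : σ.r d1 z := σ.trans' hk1rel hz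
              rcases lt_trichotomy z a with h | h | h
              · refine absurd h1 (not_lt.mpr (Finset.le_max' _ z ?_))
                rw [Finset.mem_filter]
                exact ⟨(hmemCK z).mpr hzK, h⟩
              · exact haK (h ▸ hzK)
              · refine absurd h2 (not_lt.mpr (Finset.min'_le _ z ?_))
                rw [Finset.mem_filter]
                exact ⟨(hmemCK z).mpr hzK, h⟩
            have hnk1a : ¬σ.r k1 a := fun hcon => haK (σ.trans' hk1rel hcon)
            obtain ⟨h1, h2⟩ := gap hσ (σ.trans' (σ.symm' hk1rel) hk2rel) hgap3 hk1a hak2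
              hnk1a hac
            constructor
            · calc b ≤ ys := hbys
                _ < d1 := hysd1
                _ ≤ k1 := hPe k1 hk1rel
                _ < c := h1
            · exact le_trans (le_of_lt h2) (Finset.le_max' CK k2 hk2CK)
      have := hmax M (le_trans hbys (le_trans (le_of_lt hysd1) hd1M)) hsatbM
      exact absurd (lt_of_lt_of_le hysd1 hd1M) (not_lt.mpr this)

lemma le_KlKr (σ : Setoid (Fin n)) : σ ≤ Kl (Kr σ) := by
  intro p q hpq'
  have hpq : σ.r p q := hpq'
  show (Kl (Kr σ)).r p q
  rcases lt_trichotomy p q with h | h | h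
  · rw [Kl_rel_iff h]
    intro x y hxy ⟨hx1, hx2⟩
    rcases lt_trichotomy x y with hxy' | hxy' | hxy'
    · rw [kr_rel (le_of_lt hxy')] at hxy
      refine ⟨le_trans hx1 (le_of_lt hxy'), ?_⟩
      by_contra hc
      push_neg at hc
      have := hxy q p (σ.symm' hpq) hx2 hc
      exact absurd this.1 (not_lt.mpr hx1)
    · exact hxy' ▸ ⟨hx1, hx2⟩
    · replace hxy : (Kr σ).r y x := (Kr σ).symm' hxy
      rw [kr_rel (le_of_lt hxy')] at hxy
      constructor
      · by_contra hc
        push_neg at hc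
        have := hxy p q hpq hc hx1
        exact absurd hx2 (not_lt.mpr this.2)
      · exact lt_trans hxy' hx2
  · exact h ▸ (Kl (Kr σ)).refl' p
  · refine (Kl (Kr σ)).symm' ?_
    show (Kl (Kr σ)).r q p
    rw [Kl_rel_iff h]
    intro x y hxy ⟨hx1, hx2⟩
    rcases lt_trichotomy x y with hxy' | hxy' | hxy'
    · rw [kr_rel (le_of_lt hxy')] at hxy
      refine ⟨le_trans hx1 (le_of_lt hxy'), ?_⟩
      by_contra hc
      push_neg at hc
      have := hxy p q hpq hx2 hc
      exact absurd this.1 (not_lt.mpr hx1)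
    · exact hxy' ▸ ⟨hx1, hx2⟩
    · replace hxy : (Kr σ).r y x := (Kr σ).symm' hxy
      rw [kr_rel (le_of_lt hxy')] at hxy
      constructor
      · by_contra hc
        push_neg at hc
        have := hxy q p (σ.symm' hpq) hc hx1
        exact absurd hx2 (not_lt.mpr this.2)
      · exact lt_trans hxy' hx2

lemma KlKr_le {σ : Setoid (Fin n)} (hσ : IsNoncrossing σ) : Kl (Kr σ) ≤ σ := by
  intro p q hpq'
  have hpq : (Kl (Kr σ)).r p q := hpq'
  show σ.r p q
  rcases lt_trichotomy p q with h | h | h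
  · rw [Kl_rel_iff h] at hpq
    have hm : q.val - p.val ≤ q.val - p.val := le_refl _
    refine crux hσ (q.val - p.val) p q hm h ?_
    intro x y hxy hsat
    constructor
    · intro hx
      exact hpq x y (by rw [kr_rel (le_of_lt hxy)]; exact hsat) hx
    · intro hy
      refine hpq y x ((Kr σ).symm' ?_) hy
      show (Kr σ).r x y
      rw [kr_rel (le_of_lt hxy)]
      exact hsat
  · exact h ▸ σ.refl' p
  · replace hpq : (Kl (Kr σ)).r q p := (Kl (Kr σ)).symm' hpq
    rw [Kl_rel_iff h] at hpq
    refine σ.symm' ?_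
    refine crux hσ (p.val - q.val) q p (le_refl _) h ?_
    intro x y hxy hsat
    constructor
    · intro hx
      exact hpq x y (by rw [kr_rel (le_of_lt hxy)]; exact hsat) hx
    · intro hy
      refine hpq y x ((Kr σ).symm' ?_) hy
      show (Kr σ).r x y
      rw [kr_rel (le_of_lt hxy)]
      exact hsat

lemma KlKr {σ : Setoid (Fin n)} (hσ : IsNoncrossing σ) : Kl (Kr σ) = σ :=
  le_antisymm (KlKr_le hσ) (le_KlKr σ)

lemma KrKl {τ : Setoid (Fin n)} (hτ : IsNoncrossing τ) : Kr (Kl τ) = τ := by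
  have h := KlKr (revS_NC hτ)
  have h2 := congrArg revS h
  rw [show Kl (Kr (revS τ)) = revS (Kr (revS (Kr (revS τ)))) from rfl] at h2
  rw [revS_revS] at h2
  calc Kr (Kl τ) = Kr (revS (Kr (revS τ))) := rfl
    _ = revS (revS (Kr (revS (Kr (revS τ))))) := (revS_revS _).symm
    _ = revS (revS τ) := by rw [h2, revS_revS]
    _ = τ := revS_revS τ

lemma inter_parity {π ρ : Setoid (Fin n)} {x y : Fin (2 * n)} (h : interRel π ρ x y) :
    x.val % 2 = y.val % 2 := by
  rcases h with ⟨i, j, hx, hy, _⟩ | ⟨i, j, hx, hy, _⟩ <;> subst hx <;> subst hy <;> simp <;> omega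

/-- Classification of crossings of `interRel π ρ`. -/
lemma classify {π ρ : Setoid (Fin n)}
    (h : ∃ i j k l : Fin (2 * n), i < j ∧ j < k ∧ k < l ∧ interRel π ρ i k ∧
      interRel π ρ j l ∧ ¬ interRel π ρ i j) :
    (∃ a b c d : Fin n, a < b ∧ b < c ∧ c < d ∧ π.r a c ∧ π.r b d ∧ ¬π.r a b) ∨
    (∃ a b c d : Fin n, a < b ∧ b < c ∧ c < d ∧ ρ.r a c ∧ ρ.r b d ∧ ¬ρ.r a b) ∨
    (∃ a b c d : Fin n, a ≤ b ∧ b < c ∧ c ≤ d ∧ π.r a c ∧ ρ.r b d) ∨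
    (∃ a b c d : Fin n, b < a ∧ a ≤ d ∧ d < c ∧ π.r a c ∧ ρ.r b d) := by
  obtain ⟨i, j, k, l, hij, hjk, hkl, hik, hjl, hnij⟩ := h
  rw [Fin.lt_def] at hij hjk hkl
  rcases hik with ⟨a, c, hia, hkc, hac⟩ | ⟨a, c, hia, hkc, hac⟩ <;>
    rcases hjl with ⟨b, d, hjb, hld, hbd⟩ | ⟨b, d, hjb, hld, hbd⟩ <;>
      subst hia <;> subst hkc <;> subst hjb <;> subst hld <;>
        simp only [Fin.lt_def] at hij hjk hkl
  · -- even / even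
    refine Or.inl ⟨a, b, c, d, ?_, ?_, ?_, hac, hbd, ?_⟩
    · rw [Fin.lt_def]; omega
    · rw [Fin.lt_def]; omega
    · rw [Fin.lt_def]; omega
    · intro hcon
      exact hnij (Or.inl ⟨a, b, rfl, rfl, hcon⟩)
  · -- i,k even; j,l odd : type A
    refine Or.inr (Or.inr (Or.inl ⟨a, b, c, d, ?_, ?_, ?_, hac, hbd⟩)) <;>
      first
        | (rw [Fin.le_def]; omega)
        | (rw [Fin.lt_def]; omega)
  · -- i,k odd; j,l even : type B
    refine Or.inr (Or.inr (Or.inr ⟨b, a, d, c, ?_, ?_, ?_, hbd, hac⟩)) <;>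
      first
        | (rw [Fin.le_def]; omega)
        | (rw [Fin.lt_def]; omega)
  · -- odd / odd
    refine Or.inr (Or.inl ⟨a, b, c, d, ?_, ?_, ?_, hac, hbd, ?_⟩)
    · rw [Fin.lt_def]; omega
    · rw [Fin.lt_def]; omega
    · rw [Fin.lt_def]; omega
    · intro hcon
      exact hnij (Or.inr ⟨a, b, rfl, rfl, hcon⟩)

/-- The setoid whose only nontrivial class is the pair `{u, v}`. -/
def pairS (u v : Fin n) : Setoid (Fin n) where
  r x y := x = y ∨ (x = u ∧ y = v) ∨ (x = v ∧ y = u)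
  iseqv := by
    refine ⟨fun x => Or.inl rfl, ?_, ?_⟩
    · rintro x y (rfl | ⟨rfl, rfl⟩ | ⟨rfl, rfl⟩)
      · exact Or.inl rfl
      · exact Or.inr (Or.inr ⟨rfl, rfl⟩)
      · exact Or.inr (Or.inl ⟨rfl, rfl⟩)
    · rintro x y z h1 h2
      rcases h1 with h1 | ⟨h1a, h1b⟩ | ⟨h1a, h1b⟩ <;>
        rcases h2 with h2 | ⟨h2a, h2b⟩ | ⟨h2a, h2b⟩ <;> subst_vars <;> tauto

lemma pairS_NC {u v : Fin n} (huv : u < v) : IsNoncrossing (pairS u v) := by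
  rintro ⟨i, j, k, l, hij, hjk, hkl, hik, hjl, hnij⟩
  rcases hik with rfl | ⟨rfl, rfl⟩ | ⟨rfl, rfl⟩
  · exact absurd (lt_trans hij hjk) (lt_irrefl _)
  · rcases hjl with rfl | ⟨rfl, rfl⟩ | ⟨rfl, rfl⟩
    · exact absurd (lt_trans hjk hkl) (lt_irrefl _)
    · exact absurd hij (lt_irrefl _)
    · exact absurd hjk (lt_irrefl _)
  · exact absurd (lt_trans (lt_trans hij hjk) huv) (lt_irrefl _)

lemma inter_pair_NC {σ : Setoid (Fin n)} (hσ : IsNoncrossing σ) {u v : Fin n}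
    (huv : u < v) (hsat : satR σ u v) : IsNCRel (interRel σ (pairS u v)) := by
  intro hcross
  rcases classify hcross with h | h | h | h
  · exact hσ h
  · obtain ⟨a, b, c, d, hab, hbc, hcd, hac, hbd, _⟩ := h
    rcases hac with rfl | ⟨rfl, rfl⟩ | ⟨rfl, rfl⟩
    · exact absurd hbc (by intro h2; exact absurd (lt_trans hab h2) (lt_irrefl _))
    · rcases hbd with rfl | ⟨rfl, rfl⟩ | ⟨rfl, rfl⟩
      · exact absurd (lt_trans hbc hcd) (lt_irrefl _)
      · exact absurd hab (lt_irrefl _)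
      · exact absurd hbc (lt_irrefl _)
    · exact absurd (lt_trans (lt_trans hab hbc) huv) (lt_irrefl _)
  · obtain ⟨a, b, c, d, hab, hbc, hcd, hac, hbd⟩ := h
    rcases hbd with rfl | ⟨rfl, rfl⟩ | ⟨rfl, rfl⟩
    · exact absurd (lt_of_lt_of_le hbc hcd) (lt_irrefl _)
    · -- b = u, d = v : a ≤ u < c ≤ v, σ a c
      obtain ⟨h1, h2⟩ := hsat c a (σ.symm' hac) hbc hcd
      exact absurd (lt_of_le_of_lt hab h1) (lt_irrefl _)
    · -- b = v, d = u : v < c ≤ u < v absurd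
      exact absurd (lt_of_lt_of_le hbc hcd) (not_lt.mpr (le_of_lt huv))
  · obtain ⟨a, b, c, d, hba, had, hdc, hac, hbd⟩ := h
    rcases hbd with rfl | ⟨rfl, rfl⟩ | ⟨rfl, rfl⟩
    · exact absurd (lt_of_lt_of_le hba had) (lt_irrefl _)
    · -- b = u, d = v : u < a ≤ v < c, σ a c
      obtain ⟨h1, h2⟩ := hsat a c hac hba had
      exact absurd (lt_of_le_of_lt h2 hdc) (lt_irrefl _)
    · -- b = v, d = u : v < a ≤ u < v absurd
      exact absurd (lt_of_lt_of_le hba had) (not_lt.mpr (le_of_lt huv))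

/-- For noncrossing `ρ`, the axiomatized Kreweras complement agrees with `Kr`. -/
lemma K_eq_Kr (K : Setoid (Fin n) → Setoid (Fin n))
    (hK : ∀ ρ, IsNoncrossing ρ → IsKreweras ρ (K ρ))
    (ρ : Setoid (Fin n)) (hρ : IsNoncrossing ρ) : K ρ = Kr ρ := by
  have core1 : ∀ u v : Fin n, u < v → (K ρ).r u v → satR ρ u v := by
    intro u v huv hKuv
    intro a c hac ha1 ha2
    by_contra hcon
    push_neg at hcon
    have hu2 : u.val < n := u.isLt
    have hv2 : v.val < n := v.isLt
    have ha2' : a.val < n := a.isLt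
    have hc2 : c.val < n := c.isLt
    rcases lt_or_ge v c with hvc | hcv
    · -- type B crossing: (2u+1, 2a, 2v+1, 2c)
      refine (hK ρ hρ).2.1 ⟨⟨2 * u.val + 1, by omega⟩, ⟨2 * a.val, by omega⟩,
        ⟨2 * v.val + 1, by omega⟩, ⟨2 * c.val, by omega⟩, ?_, ?_, ?_, ?_, ?_, ?_⟩
      · rw [Fin.lt_def]; rw [Fin.lt_def] at ha1; simp; omega
      · rw [Fin.lt_def]; rw [Fin.le_def] at ha2; simp; omega
      · rw [Fin.lt_def]; rw [Fin.lt_def] at hvc; simp; omega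
      · exact Or.inr ⟨u, v, rfl, rfl, hKuv⟩
      · exact Or.inl ⟨a, c, rfl, rfl, hac⟩
      · intro hcon2
        have := inter_parity hcon2
        simp at this
    · -- c ≤ u here (from hcon and c ≤ v), type A crossing: (2c, 2u+1, 2a, 2v+1)
      have hcu : c ≤ u := not_lt.mp (fun hh => absurd (hcon hh) (not_lt.mpr hcv))
      refine (hK ρ hρ).2.1 ⟨⟨2 * c.val, by omega⟩, ⟨2 * u.val + 1, by omega⟩,
        ⟨2 * a.val, by omega⟩, ⟨2 * v.val + 1, by omega⟩, ?_, ?_, ?_, ?_, ?_, ?_⟩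
      · rw [Fin.lt_def]; rw [Fin.le_def] at hcu; simp; omega
      · rw [Fin.lt_def]; rw [Fin.lt_def] at ha1; simp; omega
      · rw [Fin.lt_def]; rw [Fin.le_def] at ha2; simp; omega
      · exact Or.inl ⟨c, a, rfl, rfl, ρ.symm' hac⟩
      · exact Or.inr ⟨u, v, rfl, rfl, hKuv⟩
      · intro hcon2
        have := inter_parity hcon2
        simp at this
  have core2 : ∀ u v : Fin n, u < v → satR ρ u v → (K ρ).r u v := by
    intro u v huv hsat
    have hle := (hK ρ hρ).2.2 (pairS u v) (pairS_NC huv) (inter_pair_NC hρ huv hsat)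
    exact hle (Or.inr (Or.inl ⟨rfl, rfl⟩))
  apply Setoid.ext
  intro x y
  rcases lt_trichotomy x y with h | h | h
  · constructor
    · intro hxy
      show (Kr ρ).r x y
      rw [kr_rel (le_of_lt h)]
      exact core1 x y h hxy
    · intro hxy
      replace hxy : (Kr ρ).r x y := hxy
      rw [kr_rel (le_of_lt h)] at hxy
      exact core2 x y h hxy
  · subst h
    exact ⟨fun _ => (Kr ρ).refl' x, fun _ => (K ρ).refl' x⟩
  · constructor
    · intro hxy
      show (Kr ρ).r x y
      refine (Kr ρ).symm' ?_
      show (Kr ρ).r y x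
      rw [kr_rel (le_of_lt h)]
      exact core1 y x h ((K ρ).symm' hxy)
    · intro hxy
      replace hxy : (Kr ρ).r y x := (Kr ρ).symm' hxy
      rw [kr_rel (le_of_lt h)] at hxy
      exact (K ρ).symm' (core2 y x h hxy)

end Krew

/-- For `π ∈ NC_n`, the interval `[π, 1̂_n]` of `NC_n` is anti-isomorphic to the
interval `[0̂_n, K(π)]` of `NC_n`, via the Kreweras complement `σ ↦ K(σ)`. -/
theorem stmt16 {n : ℕ} (K : Setoid (Fin n) → Setoid (Fin n))
    (hK : ∀ ρ, IsNoncrossing ρ → IsKreweras ρ (K ρ))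
    (π : Setoid (Fin n)) (hπ : IsNoncrossing π) :
    ∃ e : {σ : Setoid (Fin n) // IsNoncrossing σ ∧ π ≤ σ} ≃o
          ({τ : Setoid (Fin n) // IsNoncrossing τ ∧ τ ≤ K π})ᵒᵈ,
      ∀ σ : {σ : Setoid (Fin n) // IsNoncrossing σ ∧ π ≤ σ},
        (OrderDual.ofDual (e σ)).val = K σ.val := by
  have hKr : K π = Kr π := K_eq_Kr K hK π hπ
  refine ⟨⟨⟨fun σ => OrderDual.toDual ⟨Kr σ.val, NC_Kr _, by rw [hKr]; exact Kr_anti σ.2.2⟩,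
      fun τ => ⟨Kl (OrderDual.ofDual τ).val, NC_Kl _, by
        have h0 : (OrderDual.ofDual τ).val ≤ Kr π := by
          rw [← hKr]; exact (OrderDual.ofDual τ).2.2
        have h := Kl_anti h0
        rwa [KlKr hπ] at h⟩,
      fun σ => Subtype.ext (KlKr σ.2.1),
      fun τ => Subtype.ext (KrKl (OrderDual.ofDual τ).2.1)⟩, ?_⟩, ?_⟩
  · intro a b
    constructor
    · intro h
      have h' : Kr b.val ≤ Kr a.val := h
      have h2 := Kl_anti h'
      rw [KlKr a.2.1, KlKr b.2.1] at h2
      exact h2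
    · intro h
      exact Kr_anti h
  · intro σ
    exact (K_eq_Kr K hK σ.val σ.2.1).symm
end
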